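/- arXiv:1303.7100 — 5 statements merged into one kernel-verified Lean document; each statement's English description precedes it below -/
import Mathlib

section
/- Under Assumptions (H), the Dyson–Phillips iterates satisfy the convolution identity: for every n ∈ ℕ, every 0 ≤ s ≤ r ≤ t and every u ∈ E, V_n(t,s)u = Σ_{k=0}^n V_k(t,r) V_{n−k}(r,s)u. -/
open MeasureTheory Set Filter Topology

/-- An abstract state space: a real normed space together with a generating positive
cone on which the norm is additive, an evolution family `U`, and a family of
(unbounded) nonnegative operators `B t` with domains `DB t`, satisfying
Assumptions (H) of the paper. -/
structure PerturbedSetting (E : Type*) [NormedAddCommGroup E] [NormedSpace ℝ E] where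
  pos : Set E
  zero_mem : (0 : E) ∈ pos
  add_mem : ∀ u v : E, u ∈ pos → v ∈ pos → u + v ∈ pos
  smul_mem : ∀ c : ℝ, 0 ≤ c → ∀ u ∈ pos, c • u ∈ pos
  generating : ∀ u : E, ∃ v w : E, v ∈ pos ∧ w ∈ pos ∧ u = v - w
  norm_add : ∀ u v : E, u ∈ pos → v ∈ pos → ‖u + v‖ = ‖u‖ + ‖v‖
  U : ℝ → ℝ → E →L[ℝ] E
  U_cont : ∀ u : E, ContinuousOn (fun p : ℝ × ℝ => U p.1 p.2 u)
    {p : ℝ × ℝ | 0 ≤ p.2 ∧ p.2 ≤ p.1}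
  U_comp : ∀ t r s : ℝ, 0 ≤ s → s ≤ r → r ≤ t → ∀ u : E, U t s u = U t r (U r s u)
  U_id : ∀ t : ℝ, 0 ≤ t → ∀ u : E, U t t u = u
  U_bound : ∃ C β : ℝ, 0 < C ∧ 0 < β ∧
    ∀ t s : ℝ, 0 ≤ s → s ≤ t → ‖U t s‖ ≤ C * Real.exp (β * (t - s))
  DB : ℝ → Set E
  B : ℝ → E → E
  DB_zero : ∀ t : ℝ, (0 : E) ∈ DB t
  DB_add : ∀ t : ℝ, ∀ u ∈ DB t, ∀ v ∈ DB t, u + v ∈ DB t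
  DB_smul : ∀ t c : ℝ, ∀ u ∈ DB t, c • u ∈ DB t
  B_add : ∀ t : ℝ, ∀ u ∈ DB t, ∀ v ∈ DB t, B t (u + v) = B t u + B t v
  B_smul : ∀ t c : ℝ, ∀ u ∈ DB t, B t (c • u) = c • B t u
  U_pos : ∀ t s : ℝ, 0 ≤ s → s ≤ t → ∀ u ∈ pos, U t s u ∈ pos
  U_contr : ∀ t s : ℝ, 0 ≤ s → s ≤ t → ∀ u ∈ pos, ‖U t s u‖ ≤ ‖u‖
  B_pos : ∀ t : ℝ, 0 ≤ t → ∀ u ∈ DB t, u ∈ pos → B t u ∈ pos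
  BU_dom : ∀ (u : E) (s : ℝ), 0 ≤ s →
    ∀ᵐ t ∂(volume.restrict (Set.Ici s)), U t s u ∈ DB t
  BU_meas : ∀ (u : E) (s : ℝ), 0 ≤ s →
    AEStronglyMeasurable (fun t => B t (U t s u)) (volume.restrict (Set.Ici s))
  BU_integrable : ∀ u ∈ pos, ∀ s t : ℝ, 0 ≤ s → s ≤ t →
    IntegrableOn (fun τ => B τ (U τ s u)) (Set.Ioc s t) volume
  BU_int : ∀ u ∈ pos, ∀ s t : ℝ, 0 ≤ s → s ≤ t →
    (∫ τ in s..t, ‖B τ (U τ s u)‖) ≤ ‖u‖ - ‖U t s u‖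

namespace HonestyAux

variable {E : Type*} [NormedAddCommGroup E] [NormedSpace ℝ E]

/-- Applying a pointwise-(strongly)-measurable family of operators to a measurable
function yields a measurable function. -/
lemma aesm_apply (μ : Measure ℝ) (T : ℝ → E →L[ℝ] E)
    (hT : ∀ y : E, AEStronglyMeasurable (fun τ => T τ y) μ)
    {g : ℝ → E} (hg : AEStronglyMeasurable g μ) :
    AEStronglyMeasurable (fun τ => T τ (g τ)) μ := by
  have hsimple : ∀ φ : SimpleFunc ℝ E, AEStronglyMeasurable (fun τ => T τ (φ τ)) μ := by
    intro φ
    induction φ using SimpleFunc.induction with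
    | const c hs =>
      rename_i s
      have heq : (fun τ => T τ ((SimpleFunc.piecewise s hs (SimpleFunc.const _ c)
          (SimpleFunc.const _ 0)) τ)) = s.indicator (fun τ => T τ c) := by
        funext τ
        by_cases hτ : τ ∈ s <;>
          simp [SimpleFunc.piecewise_apply, Set.indicator, hτ]
      rw [heq]
      exact (hT c).indicator hs
    | add hdisj hf hf' =>
      rename_i f f'
      have heq : (fun τ => T τ ((f + f') τ)) = fun τ => T τ (f τ) + T τ (f' τ) := by
        funext τ; simp [map_add]
      rw [heq]; exact hf.add hf'
  rcases hg with ⟨g', hg'm, hgg'⟩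
  have h1 : AEStronglyMeasurable (fun τ => T τ (g' τ)) μ := by
    refine aestronglyMeasurable_of_tendsto_ae atTop (fun n => hsimple (hg'm.approx n)) ?_
    exact ae_of_all _ fun τ => ((T τ).continuous.tendsto _).comp (hg'm.tendsto_approx τ)
  exact h1.congr (hgg'.mono fun τ h => by simp only [h])

variable (S : PerturbedSetting E)

/-- Almost everywhere on `(s, c]`, the trajectory is in the domain of `B`. -/
lemma ae_dom (u : E) {s : ℝ} (hs : 0 ≤ s) (c : ℝ) :
    ∀ᵐ τ ∂(volume.restrict (Ioc s c)), S.U τ s u ∈ S.DB τ :=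
  (S.BU_dom u s hs).filter_mono (ae_mono (Measure.restrict_mono (fun _ hτ => hτ.1.le) le_rfl))

lemma ae_g_pos {u : E} (hu : u ∈ S.pos) {s : ℝ} (hs : 0 ≤ s) (c : ℝ) :
    ∀ᵐ τ ∂(volume.restrict (Ioc s c)), S.B τ (S.U τ s u) ∈ S.pos := by
  filter_upwards [ae_dom S u hs c, ae_restrict_mem measurableSet_Ioc] with τ hdom hmem
  exact S.B_pos τ (hs.trans hmem.1.le) _ hdom (S.U_pos τ s hs hmem.1.le u hu)

lemma g_meas (u : E) {s : ℝ} (hs : 0 ≤ s) (c : ℝ) :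
    AEStronglyMeasurable (fun τ => S.B τ (S.U τ s u)) (volume.restrict (Ioc s c)) :=
  (S.BU_meas u s hs).mono_measure (Measure.restrict_mono (fun _ hτ => hτ.1.le) le_rfl)

lemma g_sub {s : ℝ} (hs : 0 ≤ s) (c : ℝ) {u v w : E} (hv : v ∈ S.pos) (hw : w ∈ S.pos)
    (huvw : u = v - w) :
    (fun τ => S.B τ (S.U τ s u)) =ᵐ[volume.restrict (Ioc s c)]
      fun τ => S.B τ (S.U τ s v) - S.B τ (S.U τ s w) := by
  filter_upwards [ae_dom S v hs c, ae_dom S w hs c] with τ h1 h2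
  have heq : S.U τ s u = S.U τ s v + (-1 : ℝ) • S.U τ s w := by
    rw [huvw, map_sub]; module
  rw [heq, S.B_add τ _ h1 _ (S.DB_smul τ (-1) _ h2), S.B_smul τ (-1) _ h2]
  module

variable (Vn : ℕ → ℝ → ℝ → E →L[ℝ] E)

/-- Measurability statement for the `m`-th iterate. -/
def Mprop (m : ℕ) : Prop :=
  ∀ c : ℝ, 0 ≤ c → ∀ y : E,
    AEStronglyMeasurable (fun τ => Vn m c τ y) (volume.restrict (Icc 0 c))

/-- Integrability statement for the `m`-th iterate applied along a trajectory. -/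
def Qprop (m : ℕ) : Prop :=
  ∀ s c : ℝ, 0 ≤ s → s ≤ c → ∀ u : E,
    IntegrableOn (fun τ => Vn m c τ (S.B τ (S.U τ s u))) (Ioc s c) volume

section WithRec

variable (hVn0 : ∀ t s : ℝ, 0 ≤ s → s ≤ t → ∀ u : E, Vn 0 t s u = S.U t s u)
variable (hVnrec : ∀ n : ℕ, ∀ t s : ℝ, 0 ≤ s → s ≤ t → ∀ u : E,
      Vn (n+1) t s u = ∫ r in s..t, Vn n t r (S.B r (S.U r s u)))

include hVn0 hVnrec in
/-- The iterates are contractive on the positive cone. -/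
lemma Pbound : ∀ m : ℕ, ∀ c τ : ℝ, 0 ≤ τ → τ ≤ c → ∀ x ∈ S.pos, ‖Vn m c τ x‖ ≤ ‖x‖ := by
  intro m
  induction m with
  | zero =>
    intro c τ h0 hc x hx
    rw [hVn0 c τ h0 hc]
    exact S.U_contr c τ h0 hc x hx
  | succ m ih =>
    intro c τ h0 hc x hx
    rw [hVnrec m c τ h0 hc]
    have hle : ∀ᵐ σ ∂(volume.restrict (Ioc τ c)),
        ‖Vn m c σ (S.B σ (S.U σ τ x))‖ ≤ ‖S.B σ (S.U σ τ x)‖ := by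
      filter_upwards [ae_g_pos S hx h0 c, ae_restrict_mem measurableSet_Ioc] with σ hp hσ
      exact ih c σ (h0.trans hσ.1.le) hσ.2 _ hp
    calc ‖∫ σ in τ..c, Vn m c σ (S.B σ (S.U σ τ x))‖
        ≤ ∫ σ in τ..c, ‖Vn m c σ (S.B σ (S.U σ τ x))‖ :=
          intervalIntegral.norm_integral_le_integral_norm hc
      _ ≤ ∫ σ in τ..c, ‖S.B σ (S.U σ τ x)‖ := by
          rw [intervalIntegral.integral_of_le hc, intervalIntegral.integral_of_le hc]
          exact integral_mono_of_nonneg (ae_of_all _ fun σ => norm_nonneg _)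
            (S.BU_integrable x hx τ c h0 hc).norm hle
      _ ≤ ‖x‖ - ‖S.U c τ x‖ := S.BU_int x hx τ c h0 hc
      _ ≤ ‖x‖ := by linarith [norm_nonneg (S.U c τ x)]

include hVn0 hVnrec in
lemma QofM (m : ℕ) (hM : Mprop Vn m) : Qprop S Vn m := by
  intro s c hs hsc u
  have hc : (0:ℝ) ≤ c := hs.trans hsc
  have hsub : Ioc s c ⊆ Icc 0 c := fun τ hτ => ⟨hs.trans hτ.1.le, hτ.2⟩
  have hTmeas : ∀ y : E,
      AEStronglyMeasurable (fun τ => Vn m c τ y) (volume.restrict (Ioc s c)) := fun y =>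
    (hM c hc y).mono_measure (Measure.restrict_mono hsub le_rfl)
  have hpos : ∀ v ∈ S.pos,
      IntegrableOn (fun τ => Vn m c τ (S.B τ (S.U τ s v))) (Ioc s c) volume := by
    intro v hv
    have hmeas : AEStronglyMeasurable (fun τ => Vn m c τ (S.B τ (S.U τ s v)))
        (volume.restrict (Ioc s c)) :=
      aesm_apply _ (fun τ => Vn m c τ) hTmeas (g_meas S v hs c)
    refine Integrable.mono (S.BU_integrable v hv s c hs hsc).norm hmeas ?_
    filter_upwards [ae_g_pos S hv hs c, ae_restrict_mem measurableSet_Ioc] with τ hp hτ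
    rw [norm_norm]
    exact Pbound S Vn hVn0 hVnrec m c τ (hs.trans hτ.1.le) hτ.2 _ hp
  obtain ⟨v, w, hv, hw, huvw⟩ := S.generating u
  have heq : (fun τ => Vn m c τ (S.B τ (S.U τ s v)) - Vn m c τ (S.B τ (S.U τ s w)))
      =ᵐ[volume.restrict (Ioc s c)] fun τ => Vn m c τ (S.B τ (S.U τ s u)) := by
    filter_upwards [g_sub S hs c hv hw huvw] with τ h
    rw [h, map_sub]
  exact Integrable.congr ((hpos v hv).sub (hpos w hw)) heq

include hVn0 in
lemma M0 : Mprop Vn 0 := by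
  intro c hc y
  have hcont : ContinuousOn (fun τ => S.U c τ y) (Icc 0 c) := by
    have hmaps : MapsTo (fun τ => ((c, τ) : ℝ × ℝ)) (Icc 0 c)
        {p : ℝ × ℝ | 0 ≤ p.2 ∧ p.2 ≤ p.1} := fun τ hτ => ⟨hτ.1, hτ.2⟩
    have := (S.U_cont y).comp ((continuous_const.prodMk continuous_id).continuousOn) hmaps
    simpa [Function.comp_def] using this
  refine (hcont.aestronglyMeasurable measurableSet_Icc).congr ?_
  filter_upwards [ae_restrict_mem measurableSet_Icc] with τ hτ
  exact (hVn0 c τ hτ.1 hτ.2 y).symm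

include hVnrec in
lemma keysplit (m : ℕ) (hQ : Qprop S Vn m) {c y τ τ'} (h0 : (0:ℝ) ≤ τ) (h1 : τ ≤ τ')
    (h2 : τ' ≤ c) :
    Vn (m+1) c τ y = (∫ σ in τ..τ', Vn m c σ (S.B σ (S.U σ τ y)))
      + Vn (m+1) c τ' (S.U τ' τ y) := by
  have hτc : τ ≤ c := h1.trans h2
  have hIcc := hQ τ c h0 hτc y
  have hi1 : IntervalIntegrable (fun σ => Vn m c σ (S.B σ (S.U σ τ y))) volume τ τ' :=
    (intervalIntegrable_iff_integrableOn_Ioc_of_le h1).2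
      (hIcc.mono_set (Ioc_subset_Ioc le_rfl h2))
  have hi2 : IntervalIntegrable (fun σ => Vn m c σ (S.B σ (S.U σ τ y))) volume τ' c :=
    (intervalIntegrable_iff_integrableOn_Ioc_of_le h2).2
      (hIcc.mono_set (Ioc_subset_Ioc h1 le_rfl))
  rw [hVnrec m c τ h0 hτc y, ← intervalIntegral.integral_add_adjacent_intervals hi1 hi2]
  congr 1
  rw [hVnrec m c τ' (h0.trans h1) h2]
  apply intervalIntegral.integral_congr
  intro σ hσ
  rw [uIcc_of_le h2] at hσ
  simp only [S.U_comp σ τ' τ h0 h1 hσ.1]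

include hVnrec in
lemma Msucc (m : ℕ) (hQ : Qprop S Vn m) : Mprop Vn (m+1) := by
  intro c hc y
  -- the dyadic grid approximation of the identity map from the right
  set r : ℕ → ℝ → ℝ := fun j τ => min c (((⌈τ * 2^j⌉ : ℤ) : ℝ) / 2^j) with hr
  have h2pos : ∀ j : ℕ, (0:ℝ) < 2^j := fun j => pow_pos two_pos j
  have hτr : ∀ j : ℕ, ∀ τ ∈ Icc (0:ℝ) c, τ ≤ r j τ := by
    intro j τ hτ
    refine le_min hτ.2 ?_
    rw [le_div_iff₀ (h2pos j)]
    exact Int.le_ceil _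
  have hrc : ∀ j : ℕ, ∀ τ : ℝ, r j τ ≤ c := fun j τ => min_le_left _ _
  have hub : ∀ j : ℕ, ∀ τ : ℝ, r j τ ≤ τ + ((2:ℝ)^j)⁻¹ := by
    intro j τ
    refine (min_le_right _ _).trans ?_
    rw [div_le_iff₀ (h2pos j)]
    have := (Int.ceil_lt_add_one (τ * 2^j)).le
    calc ((⌈τ * 2^j⌉ : ℤ) : ℝ) ≤ τ * 2^j + 1 := this
      _ = (τ + ((2:ℝ)^j)⁻¹) * 2^j := by field_simp
  set G : ℕ → ℝ → E := fun j τ => Vn (m+1) c (r j τ) (S.U (r j τ) τ y) with hG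
  have hGmeas : ∀ j : ℕ, AEStronglyMeasurable (G j) (volume.restrict (Icc 0 c)) := by
    intro j
    set A : ℤ → Set ℝ := fun i => Icc 0 c ∩ {τ : ℝ | ⌈τ * 2^j⌉ = i} with hA
    have hAmeas : ∀ i : ℤ, MeasurableSet (A i) :=
      fun i => measurableSet_Icc.inter ((Int.measurable_ceil.comp
        (measurable_id.mul_const _)) (MeasurableSet.singleton i))
    have hcover : Icc (0:ℝ) c ⊆ ⋃ i : ℤ, A i := fun τ hτ =>
      mem_iUnion.2 ⟨⌈τ * 2^j⌉, hτ, rfl⟩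
    have hAi : ∀ i : ℤ, AEStronglyMeasurable (G j) (volume.restrict (A i)) := by
      intro i
      set p : ℝ := min c (((i : ℤ) : ℝ) / 2^j) with hp
      have hApsub : A i ⊆ Icc 0 p := by
        rintro τ ⟨hτ1, hτ2⟩
        have : r j τ = p := by
          simp only [hr, hp, mem_setOf_eq.mp hτ2]
        exact ⟨hτ1.1, (this ▸ hτr j τ hτ1)⟩
      have hcont : ContinuousOn (fun τ => Vn (m+1) c p (S.U p τ y)) (Icc 0 p) := by
        have hmaps : MapsTo (fun τ => ((p, τ) : ℝ × ℝ)) (Icc 0 p)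
            {q : ℝ × ℝ | 0 ≤ q.2 ∧ q.2 ≤ q.1} := fun τ hτ => ⟨hτ.1, hτ.2⟩
        have hUcont := (S.U_cont y).comp
          ((continuous_const.prodMk continuous_id).continuousOn) hmaps
        exact ((Vn (m+1) c p).continuous.comp_continuousOn (by simpa [Function.comp_def] using hUcont))
      have hmeasp : AEStronglyMeasurable (fun τ => Vn (m+1) c p (S.U p τ y))
          (volume.restrict (A i)) :=
        (hcont.aestronglyMeasurable measurableSet_Icc).mono_measure
          (Measure.restrict_mono hApsub le_rfl)
      refine hmeasp.congr ?_
      rw [EventuallyEq, ae_restrict_iff' (hAmeas i)]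
      refine ae_of_all _ fun τ hτ => ?_
      have : r j τ = p := by simp only [hr, hp, mem_setOf_eq.mp hτ.2]
      simp only [hG, this]
    have := aestronglyMeasurable_iUnion_iff.2 hAi
    exact this.mono_measure (Measure.restrict_mono hcover le_rfl)
  have htend : ∀ᵐ τ ∂(volume.restrict (Icc 0 c)),
      Tendsto (fun j => G j τ) atTop (𝓝 (Vn (m+1) c τ y)) := by
    rw [ae_restrict_iff' measurableSet_Icc]
    refine ae_of_all _ fun τ hτ => ?_
    have hF : IntegrableOn (fun σ => Vn m c σ (S.B σ (S.U σ τ y))) (Ioc τ c) volume :=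
      hQ τ c hτ.1 hτ.2 y
    have hdiff : ∀ j : ℕ, Vn (m+1) c τ y - G j τ
        = ∫ σ in τ..(r j τ), Vn m c σ (S.B σ (S.U σ τ y)) := by
      intro j
      rw [keysplit S Vn hVnrec m hQ hτ.1 (hτr j τ hτ) (hrc j τ)]
      abel
    have hnorm : ∀ j : ℕ, ‖Vn (m+1) c τ y - G j τ‖
        ≤ ∫ σ in Ioc τ c, (Ioc τ (r j τ)).indicator
            (fun σ => ‖Vn m c σ (S.B σ (S.U σ τ y))‖) σ := by
      intro j
      rw [hdiff j]
      calc ‖∫ σ in τ..(r j τ), Vn m c σ (S.B σ (S.U σ τ y))‖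
          ≤ ∫ σ in τ..(r j τ), ‖Vn m c σ (S.B σ (S.U σ τ y))‖ :=
            intervalIntegral.norm_integral_le_integral_norm (hτr j τ hτ)
        _ = ∫ σ in Ioc τ (r j τ), ‖Vn m c σ (S.B σ (S.U σ τ y))‖ :=
            intervalIntegral.integral_of_le (hτr j τ hτ)
        _ = ∫ σ in Ioc τ c, (Ioc τ (r j τ)).indicator
              (fun σ => ‖Vn m c σ (S.B σ (S.U σ τ y))‖) σ := by
            rw [setIntegral_indicator measurableSet_Ioc, Set.Ioc_inter_Ioc, max_self,
              min_eq_right (hrc j τ)]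
    have hzero : Tendsto (fun j => ∫ σ in Ioc τ c, (Ioc τ (r j τ)).indicator
        (fun σ => ‖Vn m c σ (S.B σ (S.U σ τ y))‖) σ) atTop (𝓝 0) := by
      have := tendsto_integral_of_dominated_convergence
        (μ := volume.restrict (Ioc τ c))
        (F := fun j σ => (Ioc τ (r j τ)).indicator
          (fun σ => ‖Vn m c σ (S.B σ (S.U σ τ y))‖) σ)
        (f := fun _ => (0:ℝ))
        (fun σ => ‖Vn m c σ (S.B σ (S.U σ τ y))‖)
        (fun j => (hF.norm.aestronglyMeasurable).indicator measurableSet_Ioc)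
        hF.norm
        (fun j => ae_of_all _ fun σ => by
          by_cases hσ : σ ∈ Ioc τ (r j τ) <;>
            simp [Set.indicator, hσ, norm_nonneg, Real.norm_eq_abs, abs_norm])
        ?_
      · simpa using this
      · rw [ae_restrict_iff' measurableSet_Ioc]
        refine ae_of_all _ fun σ hσ => ?_
        have hev : ∀ᶠ j in atTop, (Ioc τ (r j τ)).indicator
            (fun σ => ‖Vn m c σ (S.B σ (S.U σ τ y))‖) σ = 0 := by
          have h2 : Tendsto (fun j : ℕ => ((2:ℝ)^j)⁻¹) atTop (𝓝 0) := by
            have := tendsto_pow_atTop_nhds_zero_of_lt_one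
              (by norm_num : (0:ℝ) ≤ 2⁻¹) (by norm_num : (2:ℝ)⁻¹ < 1)
            simpa [inv_pow] using this
          have hlt : ∀ᶠ j : ℕ in atTop, ((2:ℝ)^j)⁻¹ < σ - τ :=
            h2.eventually_lt_const (by linarith [hσ.1])
          filter_upwards [hlt] with j hj
          refine Set.indicator_of_notMem (fun hmem => ?_) _
          have hlt2 : r j τ < σ := lt_of_le_of_lt (hub j τ) (by linarith)
          exact absurd hmem.2 (not_le.2 hlt2)
        exact Tendsto.congr' (hev.mono fun j hj => hj.symm) tendsto_const_nhds
    have hd0 : Tendsto (fun j => Vn (m+1) c τ y - G j τ) atTop (𝓝 0) :=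
      squeeze_zero_norm hnorm hzero
    have hfin : Tendsto (fun j : ℕ => Vn (m+1) c τ y - (Vn (m+1) c τ y - G j τ)) atTop
        (𝓝 (Vn (m+1) c τ y - 0)) := tendsto_const_nhds.sub hd0
    simpa using hfin
  exact aestronglyMeasurable_of_tendsto_ae atTop hGmeas htend

end WithRec

end HonestyAux

theorem honesty_stmt2 {E : Type*} [NormedAddCommGroup E] [NormedSpace ℝ E]
    [CompleteSpace E] (S : PerturbedSetting E)
    (Vn : ℕ → ℝ → ℝ → E →L[ℝ] E)
    (hVn0 : ∀ t s : ℝ, 0 ≤ s → s ≤ t → ∀ u : E, Vn 0 t s u = S.U t s u)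
    (hVnrec : ∀ n : ℕ, ∀ t s : ℝ, 0 ≤ s → s ≤ t → ∀ u : E,
      Vn (n+1) t s u = ∫ r in s..t, Vn n t r (S.B r (S.U r s u)))
    :
    ∀ n : ℕ, ∀ t r s : ℝ, 0 ≤ s → s ≤ r → r ≤ t → ∀ u : E,
      Vn n t s u = ∑ k ∈ Finset.range (n+1), Vn k t r (Vn (n-k) r s u) := by
  have hMQ : ∀ m : ℕ, HonestyAux.Mprop Vn m ∧ HonestyAux.Qprop S Vn m := by
    intro m
    induction m with
    | zero =>
      exact ⟨HonestyAux.M0 S Vn hVn0,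
        HonestyAux.QofM S Vn hVn0 hVnrec 0 (HonestyAux.M0 S Vn hVn0)⟩
    | succ m ih =>
      have hM := HonestyAux.Msucc S Vn hVnrec m ih.2
      exact ⟨hM, HonestyAux.QofM S Vn hVn0 hVnrec (m+1) hM⟩
  intro n
  induction n with
  | zero =>
    intro t r s hs hsr hrt u
    simp only [zero_add, Finset.sum_range_one, Nat.sub_self]
    rw [hVn0 t s hs (hsr.trans hrt), hVn0 t r (hs.trans hsr) hrt, hVn0 r s hs hsr]
    exact S.U_comp t r s hs hsr hrt u
  | succ n ih =>
    intro t r s hs hsr hrt u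
    have h0r : (0:ℝ) ≤ r := hs.trans hsr
    have hst : s ≤ t := hsr.trans hrt
    have hIr : IntervalIntegrable (fun τ => Vn n t τ (S.B τ (S.U τ s u))) volume r t := by
      rw [intervalIntegrable_iff_integrableOn_Ioc_of_le hrt]
      refine ((hMQ n).2 r t h0r hrt (S.U r s u)).congr_fun ?_ measurableSet_Ioc
      intro τ hτ
      simp only [S.U_comp τ r s hs hsr hτ.1.le]
    have hinner : ∀ k, IntervalIntegrable
        (fun τ => Vn (n-k) r τ (S.B τ (S.U τ s u))) volume s r := by
      intro k
      rw [intervalIntegrable_iff_integrableOn_Ioc_of_le hsr]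
      exact (hMQ (n-k)).2 s r hs hsr u
    have hsum_int : ∀ k ∈ Finset.range (n+1), IntervalIntegrable
        (fun τ => Vn k t r (Vn (n-k) r τ (S.B τ (S.U τ s u)))) volume s r := by
      intro k _
      rw [intervalIntegrable_iff_integrableOn_Ioc_of_le hsr]
      exact (Vn k t r).integrable_comp
        ((intervalIntegrable_iff_integrableOn_Ioc_of_le hsr).1 (hinner k))
    have hEq : EqOn (fun τ => Vn n t τ (S.B τ (S.U τ s u)))
        (fun τ => ∑ k ∈ Finset.range (n+1), Vn k t r (Vn (n-k) r τ (S.B τ (S.U τ s u))))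
        (uIcc s r) := by
      intro τ hτ
      rw [uIcc_of_le hsr] at hτ
      exact ih t r τ (hs.trans hτ.1) hτ.2 hrt _
    have hIl : IntervalIntegrable (fun τ => Vn n t τ (S.B τ (S.U τ s u))) volume s r := by
      rw [intervalIntegrable_iff_integrableOn_Ioc_of_le hsr]
      have hs_int : IntegrableOn (fun τ =>
          ∑ k ∈ Finset.range (n+1), Vn k t r (Vn (n-k) r τ (S.B τ (S.U τ s u))))
          (Ioc s r) volume :=
        integrable_finset_sum _ (fun k hk =>
          (intervalIntegrable_iff_integrableOn_Ioc_of_le hsr).1 (hsum_int k hk))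
      refine hs_int.congr_fun ?_ measurableSet_Ioc
      intro τ hτ
      exact (hEq (by rw [uIcc_of_le hsr]; exact Ioc_subset_Icc_self hτ)).symm
    rw [hVnrec n t s hs hst u, ← intervalIntegral.integral_add_adjacent_intervals hIl hIr]
    have h2 : (∫ τ in r..t, Vn n t τ (S.B τ (S.U τ s u))) = Vn (n+1) t r (S.U r s u) := by
      rw [hVnrec n t r h0r hrt (S.U r s u)]
      apply intervalIntegral.integral_congr
      intro τ hτ
      rw [uIcc_of_le hrt] at hτ
      simp only [S.U_comp τ r s hs hsr hτ.1]
    have h1 : (∫ τ in s..r, Vn n t τ (S.B τ (S.U τ s u)))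
        = ∑ k ∈ Finset.range (n+1), Vn k t r (Vn (n-k+1) r s u) := by
      rw [intervalIntegral.integral_congr hEq, intervalIntegral.integral_finset_sum hsum_int]
      refine Finset.sum_congr rfl fun k _ => ?_
      rw [ContinuousLinearMap.intervalIntegral_comp_comm _ (hinner k),
        ← hVnrec (n-k) r s hs hsr u]
    rw [h1, h2]
    conv_rhs => rw [Finset.sum_range_succ]
    congr 1
    · refine Finset.sum_congr rfl fun k hk => ?_
      have hk' : k ≤ n := Nat.lt_succ_iff.1 (Finset.mem_range.1 hk)
      have hnk : n - k + 1 = n + 1 - k := by omega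
      rw [hnk]
    · rw [Nat.sub_self, hVn0 r s hs hsr u]
end

section
/- Under Assumptions (H), the Dyson–Phillips iterates have the following continuity properties: (a) for every n ≥ 1, every t ≥ 0 and every u ∈ E, lim_{h→0⁺} V_n(t+h,t)u = 0 in E; (b) for every n ∈ ℕ, s ≥ 0 and u ∈ E, the map t ∈ [s,∞) ↦ V_n(t,s)u is continuous; (c) for every n ∈ ℕ, every r ≥ 0, t > r and u ∈ E, the map s ∈ (r,t) ↦ V_n(t,s)u is continuous. -/
open MeasureTheory Set Filter Topology

section Aux

variable {E : Type*} [NormedAddCommGroup E] [NormedSpace ℝ E] [CompleteSpace E]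
variable (S : PerturbedSetting E) (Vn : ℕ → ℝ → ℝ → E →L[ℝ] E)

/-- a.e. facts about the integrand `τ ↦ B τ (U τ s u)` on `Ioc s t`. -/
lemma PS_gfacts {u : E} (hu : u ∈ S.pos) {s : ℝ} (t : ℝ) (hs : 0 ≤ s) :
    ∀ᵐ τ ∂(volume.restrict (Set.Ioc s t)),
      S.U τ s u ∈ S.DB τ ∧ S.B τ (S.U τ s u) ∈ S.pos := by
  have h1 : ∀ᵐ τ ∂(volume.restrict (Set.Ioc s t)), S.U τ s u ∈ S.DB τ :=
    ae_restrict_of_ae_restrict_of_subset (fun x hx => hx.1.le) (S.BU_dom u s hs)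
  have h2 := ae_restrict_mem (μ := volume) (measurableSet_Ioc (a := s) (b := t))
  filter_upwards [h1, h2] with τ hdom hmem
  have hτ : 0 ≤ τ := hs.trans hmem.1.le
  exact ⟨hdom, S.B_pos τ hτ _ hdom (S.U_pos τ s hs hmem.1.le u hu)⟩

lemma PS_contraction_step {n : ℕ}
    (hVnrec : ∀ n : ℕ, ∀ t s : ℝ, 0 ≤ s → s ≤ t → ∀ u : E,
      Vn (n+1) t s u = ∫ r in s..t, Vn n t r (S.B r (S.U r s u)))
    (IH : ∀ t s : ℝ, 0 ≤ s → s ≤ t → ∀ u ∈ S.pos, ‖Vn n t s u‖ ≤ ‖u‖) :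
    ∀ t s : ℝ, 0 ≤ s → s ≤ t → ∀ u ∈ S.pos,
      ‖Vn (n+1) t s u‖ ≤ ‖u‖ - ‖S.U t s u‖ := by
  intro t s hs hst u hu
  rw [hVnrec n t s hs hst u, intervalIntegral.integral_of_le hst]
  calc ‖∫ τ in Set.Ioc s t, Vn n t τ (S.B τ (S.U τ s u))‖
      ≤ ∫ τ in Set.Ioc s t, ‖Vn n t τ (S.B τ (S.U τ s u))‖ :=
        norm_integral_le_integral_norm _
    _ ≤ ∫ τ in Set.Ioc s t, ‖S.B τ (S.U τ s u)‖ := by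
        apply integral_mono_of_nonneg (Eventually.of_forall fun τ => norm_nonneg _)
          ((S.BU_integrable u hu s t hs hst).norm)
        filter_upwards [PS_gfacts S hu t hs, ae_restrict_mem measurableSet_Ioc]
          with τ hg hmem
        exact IH t τ (hs.trans hmem.1.le) hmem.2 _ hg.2
    _ ≤ ‖u‖ - ‖S.U t s u‖ := by
        rw [← intervalIntegral.integral_of_le hst]; exact S.BU_int u hu s t hs hst

lemma PS_contraction
    (hVn0 : ∀ t s : ℝ, 0 ≤ s → s ≤ t → ∀ u : E, Vn 0 t s u = S.U t s u)
    (hVnrec : ∀ n : ℕ, ∀ t s : ℝ, 0 ≤ s → s ≤ t → ∀ u : E,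
      Vn (n+1) t s u = ∫ r in s..t, Vn n t r (S.B r (S.U r s u))) :
    ∀ n : ℕ, ∀ t s : ℝ, 0 ≤ s → s ≤ t → ∀ u ∈ S.pos, ‖Vn n t s u‖ ≤ ‖u‖ := by
  intro n
  induction n with
  | zero =>
    intro t s hs hst u hu
    rw [hVn0 t s hs hst u]; exact S.U_contr t s hs hst u hu
  | succ n IH =>
    intro t s hs hst u hu
    have := PS_contraction_step S Vn hVnrec IH t s hs hst u hu
    have h2 := norm_nonneg (S.U t s u)
    linarith

lemma PS_contraction_succ
    (hVn0 : ∀ t s : ℝ, 0 ≤ s → s ≤ t → ∀ u : E, Vn 0 t s u = S.U t s u)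
    (hVnrec : ∀ n : ℕ, ∀ t s : ℝ, 0 ≤ s → s ≤ t → ∀ u : E,
      Vn (n+1) t s u = ∫ r in s..t, Vn n t r (S.B r (S.U r s u))) :
    ∀ n : ℕ, ∀ t s : ℝ, 0 ≤ s → s ≤ t → ∀ u ∈ S.pos,
      ‖Vn (n+1) t s u‖ ≤ ‖u‖ - ‖S.U t s u‖ :=
  fun n => PS_contraction_step S Vn hVnrec (PS_contraction S Vn hVn0 hVnrec n)

lemma PS_unif_bound
    (hVn0 : ∀ t s : ℝ, 0 ≤ s → s ≤ t → ∀ u : E, Vn 0 t s u = S.U t s u)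
    (hVnrec : ∀ n : ℕ, ∀ t s : ℝ, 0 ≤ s → s ≤ t → ∀ u : E,
      Vn (n+1) t s u = ∫ r in s..t, Vn n t r (S.B r (S.U r s u))) :
    ∃ M : ℝ, ∀ (n : ℕ) (t s : ℝ), 0 ≤ s → s ≤ t → ∀ x : E,
      ‖Vn n t s x‖ ≤ M * ‖x‖ := by
  have hcontr := PS_contraction S Vn hVn0 hVnrec
  have hpt : ∀ x : E, ∃ C, ∀ i : ℕ × {p : ℝ × ℝ // 0 ≤ p.2 ∧ p.2 ≤ p.1},
      ‖Vn i.1 i.2.1.1 i.2.1.2 x‖ ≤ C := by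
    intro x
    obtain ⟨v, w, hv, hw, hx⟩ := S.generating x
    refine ⟨‖v‖ + ‖w‖, fun i => ?_⟩
    obtain ⟨n, ⟨⟨t, s⟩, hs, hst⟩⟩ := i
    have hsub : Vn n t s x = Vn n t s v - Vn n t s w := by rw [hx, map_sub]
    calc ‖Vn n t s x‖ = ‖Vn n t s v - Vn n t s w‖ := by rw [hsub]
      _ ≤ ‖Vn n t s v‖ + ‖Vn n t s w‖ := norm_sub_le _ _
      _ ≤ ‖v‖ + ‖w‖ :=
          add_le_add (hcontr n t s hs hst v hv) (hcontr n t s hs hst w hw)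
  obtain ⟨C, hC⟩ := banach_steinhaus
    (g := fun i : ℕ × {p : ℝ × ℝ // 0 ≤ p.2 ∧ p.2 ≤ p.1} => Vn i.1 i.2.1.1 i.2.1.2) hpt
  exact ⟨C, fun n t s hs hst x =>
    ContinuousLinearMap.le_of_opNorm_le _ (hC (n, ⟨(t, s), hs, hst⟩)) x⟩

/-- Measurability of `τ ↦ φ τ (g τ)` when `τ ↦ φ τ w` is continuous on a measurable
set and `g` is a.e. strongly measurable. -/
lemma PS_meas_apply {φ : ℝ → E →L[ℝ] E} {s0 : Set ℝ} (hs0 : MeasurableSet s0)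
    (hφ : ∀ w : E, ContinuousOn (fun τ => φ τ w) s0)
    {g : ℝ → E} (hg : AEStronglyMeasurable g (volume.restrict s0)) :
    AEStronglyMeasurable (fun τ => φ τ (g τ)) (volume.restrict s0) := by
  obtain ⟨g', hg'm, hgg'⟩ := hg
  have key : ∀ f : SimpleFunc ℝ E,
      AEStronglyMeasurable (fun τ => φ τ (f τ)) (volume.restrict s0) := by
    intro f
    refine SimpleFunc.induction (fun c {A} hA => ?_) (fun f₁ f₂ _ h1 h2 => ?_) f
    · have hfun : (fun τ => φ τ ((SimpleFunc.piecewise A hA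
          (SimpleFunc.const ℝ c) (SimpleFunc.const ℝ 0)) τ))
          = Set.indicator A (fun τ => φ τ c) := by
        funext τ
        by_cases h : τ ∈ A
        · simp [SimpleFunc.piecewise_apply, h]
        · simp [SimpleFunc.piecewise_apply, h]
      rw [hfun]
      exact ((hφ c).aestronglyMeasurable hs0).indicator hA
    · have hfun : (fun τ => φ τ ((f₁ + f₂) τ))
          = fun τ => φ τ (f₁ τ) + φ τ (f₂ τ) := by
        funext τ; simp [map_add]
      rw [hfun]
      exact h1.add h2
  have hlim : ∀ τ, Tendsto (fun k => φ τ (hg'm.approx k τ)) atTop (𝓝 (φ τ (g' τ))) :=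
    fun τ => ((φ τ).continuous.tendsto _).comp (hg'm.tendsto_approx τ)
  have hmain : AEStronglyMeasurable (fun τ => φ τ (g' τ)) (volume.restrict s0) :=
    aestronglyMeasurable_of_tendsto_ae atTop (fun k => key (hg'm.approx k))
      (ae_of_all _ hlim)
  exact hmain.congr (hgg'.mono fun τ h => by show (φ τ) (g' τ) = (φ τ) (g τ); rw [h])

lemma PS_integrand_integrable {n : ℕ} {t a : ℝ} {u : E} (hu : u ∈ S.pos)
    (ha : 0 ≤ a) (hat : a ≤ t)
    {M : ℝ} (hM : ∀ (n : ℕ) (t s : ℝ), 0 ≤ s → s ≤ t → ∀ x : E, ‖Vn n t s x‖ ≤ M * ‖x‖)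
    (hc : ∀ w : E, ContinuousOn (fun τ => Vn n t τ w) (Set.Ioo a t)) :
    IntegrableOn (fun τ => Vn n t τ (S.B τ (S.U τ a u))) (Set.Ioc a t) volume := by
  have hgm : AEStronglyMeasurable (fun τ => S.B τ (S.U τ a u))
      (volume.restrict (Set.Ioo a t)) :=
    (S.BU_meas u a ha).mono_measure (Measure.restrict_mono (fun x hx => hx.1.le) le_rfl)
  have hasm := PS_meas_apply measurableSet_Ioo hc hgm
  have hasm' : AEStronglyMeasurable (fun τ => Vn n t τ (S.B τ (S.U τ a u)))
      (volume.restrict (Set.Ioc a t)) := by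
    rwa [Measure.restrict_congr_set Ioo_ae_eq_Ioc] at hasm
  refine Integrable.mono' ((S.BU_integrable u hu a t ha hat).norm.const_mul M) hasm' ?_
  filter_upwards [ae_restrict_mem measurableSet_Ioc] with τ hτ
  exact hM n t τ (ha.trans hτ.1.le) hτ.2 _

end Aux
section PartA

variable {E : Type*} [NormedAddCommGroup E] [NormedSpace ℝ E] [CompleteSpace E]
variable (S : PerturbedSetting E) (Vn : ℕ → ℝ → ℝ → E →L[ℝ] E)

lemma PS_partA
    (hVn0 : ∀ t s : ℝ, 0 ≤ s → s ≤ t → ∀ u : E, Vn 0 t s u = S.U t s u)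
    (hVnrec : ∀ n : ℕ, ∀ t s : ℝ, 0 ≤ s → s ≤ t → ∀ u : E,
      Vn (n+1) t s u = ∫ r in s..t, Vn n t r (S.B r (S.U r s u))) :
    ∀ n : ℕ, 1 ≤ n → ∀ t : ℝ, 0 ≤ t → ∀ u : E,
      Tendsto (fun h : ℝ => Vn n (t + h) t u) (𝓝[>] 0) (𝓝 0) := by
  have hcs := PS_contraction_succ S Vn hVn0 hVnrec
  intro n hn t ht u
  obtain ⟨m, rfl⟩ : ∃ m, n = m + 1 := ⟨n - 1, (Nat.succ_pred_eq_of_pos hn).symm⟩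
  -- the key limit: ‖U (t+h) t x‖ → ‖x‖
  have hUx : ∀ x : E, Tendsto (fun h : ℝ => S.U (t + h) t x) (𝓝[>] 0) (𝓝 x) := by
    intro x
    have h1 : Tendsto (fun h : ℝ => ((t + h, t) : ℝ × ℝ)) (𝓝[>] 0)
        (𝓝[{p : ℝ × ℝ | 0 ≤ p.2 ∧ p.2 ≤ p.1}] (t, t)) := by
      apply tendsto_nhdsWithin_of_tendsto_nhds_of_eventually_within
      · exact (((continuous_const.add continuous_id).prodMk continuous_const).tendsto'
          0 (t, t) (by simp)).mono_left nhdsWithin_le_nhds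
      · filter_upwards [self_mem_nhdsWithin] with h hh
        exact ⟨ht, by linarith [mem_Ioi.1 hh]⟩
    have h2 := (((S.U_cont x) (t, t) ⟨ht, le_refl t⟩).tendsto).comp h1
    simpa [Function.comp_def, S.U_id t ht x] using h2
  have key : ∀ x ∈ S.pos,
      Tendsto (fun h : ℝ => Vn (m+1) (t + h) t x) (𝓝[>] 0) (𝓝 0) := by
    intro x hx
    rw [tendsto_zero_iff_norm_tendsto_zero]
    apply squeeze_zero' (Eventually.of_forall fun h => norm_nonneg _)
      (g := fun h : ℝ => ‖x‖ - ‖S.U (t + h) t x‖)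
    · filter_upwards [self_mem_nhdsWithin] with h hh
      exact hcs m (t + h) t ht (by linarith [mem_Ioi.1 hh]) x hx
    · have := (tendsto_const_nhds (x := ‖x‖) (f := 𝓝[>] (0:ℝ))).sub (hUx x).norm
      simpa using this
  obtain ⟨v, w, hv, hw, rfl⟩ := S.generating u
  have h := (key v hv).sub (key w hw)
  simpa only [← map_sub, sub_zero] using h

end PartA
section PartBC

variable {E : Type*} [NormedAddCommGroup E] [NormedSpace ℝ E] [CompleteSpace E]
variable (S : PerturbedSetting E) (Vn : ℕ → ℝ → ℝ → E →L[ℝ] E)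

lemma PS_partBC
    (hVn0 : ∀ t s : ℝ, 0 ≤ s → s ≤ t → ∀ u : E, Vn 0 t s u = S.U t s u)
    (hVnrec : ∀ n : ℕ, ∀ t s : ℝ, 0 ≤ s → s ≤ t → ∀ u : E,
      Vn (n+1) t s u = ∫ r in s..t, Vn n t r (S.B r (S.U r s u))) :
    ∀ n : ℕ,
      (∀ s : ℝ, 0 ≤ s → ∀ u : E, ContinuousOn (fun t => Vn n t s u) (Set.Ici s)) ∧
      (∀ r t : ℝ, 0 ≤ r → r < t → ∀ u : E,
        ContinuousOn (fun s => Vn n t s u) (Set.Ioo r t)) := by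
  have hcontr := PS_contraction S Vn hVn0 hVnrec
  obtain ⟨M, hM⟩ := PS_unif_bound S Vn hVn0 hVnrec
  intro n
  induction n with
  | zero =>
    constructor
    · intro s hs u
      have hcont : ContinuousOn (fun t : ℝ => S.U t s u) (Set.Ici s) :=
        (S.U_cont u).comp ((continuous_id.prodMk continuous_const).continuousOn)
          (fun t (ht : t ∈ Set.Ici s) => ⟨hs, ht⟩)
      exact hcont.congr (fun t ht => hVn0 t s hs ht u)
    · intro r t hr hrt u
      have hcont : ContinuousOn (fun s : ℝ => S.U t s u) (Set.Ioo r t) :=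
        (S.U_cont u).comp ((continuous_const.prodMk continuous_id).continuousOn)
          (fun s hs => ⟨hr.trans hs.1.le, hs.2.le⟩)
      exact hcont.congr (fun s hs => hVn0 t s (hr.trans hs.1.le) hs.2.le u)
  | succ n IH =>
    constructor
    · -- part (b) for n+1
      have key : ∀ s : ℝ, 0 ≤ s → ∀ u, u ∈ S.pos →
          ContinuousOn (fun t => Vn (n+1) t s u) (Set.Ici s) := by
        intro s hs u hu t₀ ht₀
        set T := t₀ + 1 with hT
        have ht₀T : t₀ < T := by rw [hT]; linarith
        have hsT : s ≤ T := le_of_lt (lt_of_le_of_lt ht₀ ht₀T)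
        set g : ℝ → E := fun τ => S.B τ (S.U τ s u) with hg
        set F : ℝ → ℝ → E := fun t τ =>
          (Set.Ioc s t).indicator (fun τ => Vn n t τ (g τ)) τ with hF
        have hVF : ∀ t, s ≤ t → t ≤ T → Vn (n+1) t s u = ∫ τ in Set.Ioc s T, F t τ := by
          intro t hst htT
          have h1 : (∫ τ in Set.Ioc s T, F t τ) = ∫ τ in Set.Ioc s t, Vn n t τ (g τ) := by
            simp only [hF]
            rw [integral_indicator measurableSet_Ioc,
              Measure.restrict_restrict measurableSet_Ioc,
              Set.inter_eq_self_of_subset_left (Set.Ioc_subset_Ioc_right htT)]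
          rw [h1, hVnrec n t s hs hst u, intervalIntegral.integral_of_le hst]
        -- the filter we work with
        have hl : 𝓝[Set.Iic T ∩ Set.Ici s] t₀ = 𝓝[Set.Ici s] t₀ :=
          nhdsWithin_inter_of_mem
            (mem_nhdsWithin_of_mem_nhds (Iic_mem_nhds ht₀T))
        have hIcc : Set.Iic T ∩ Set.Ici s = Set.Icc s T := by
          rw [Set.inter_comm, Set.Ici_inter_Iic]
        have hfilt : 𝓝[Set.Ici s] t₀ = 𝓝[Set.Icc s T] t₀ := by rw [← hl, hIcc]
        have main : Tendsto (fun t => ∫ τ in Set.Ioc s T, F t τ) (𝓝[Set.Icc s T] t₀)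
            (𝓝 (∫ τ in Set.Ioc s T, F t₀ τ)) := by
          apply tendsto_integral_filter_of_dominated_convergence (fun τ => ‖g τ‖)
          · -- a.e. strong measurability
            filter_upwards [self_mem_nhdsWithin] with t htm
            rcases eq_or_lt_of_le htm.1 with h | h
            · have hFt : F t = fun _ => (0 : E) := by
                funext τ; simp only [hF]; simp [← h]
              rw [hFt]; exact aestronglyMeasurable_const
            · simp only [hF]
              apply (aestronglyMeasurable_indicator_iff measurableSet_Ioc).2
              rw [Measure.restrict_restrict measurableSet_Ioc,
                Set.inter_eq_self_of_subset_left (Set.Ioc_subset_Ioc_right htm.2),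
                ← Measure.restrict_congr_set Ioo_ae_eq_Ioc]
              exact PS_meas_apply measurableSet_Ioo (fun w => IH.2 s t hs h w)
                ((S.BU_meas u s hs).mono_measure
                  (Measure.restrict_mono (fun x hx => hx.1.le) le_rfl))
          · -- domination
            filter_upwards [self_mem_nhdsWithin] with t htm
            filter_upwards [PS_gfacts S hu T hs, ae_restrict_mem measurableSet_Ioc]
              with τ hgf hmem
            simp only [hF]
            by_cases hτ : τ ∈ Set.Ioc s t
            · rw [Set.indicator_of_mem hτ]
              exact hcontr n t τ (hs.trans hτ.1.le) hτ.2 _ hgf.2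
            · rw [Set.indicator_of_notMem hτ]; simp
          · exact (S.BU_integrable u hu s T hs hsT).norm
          · -- a.e. pointwise convergence
            have hne : ∀ᵐ τ ∂(volume.restrict (Set.Ioc s T)), τ ≠ t₀ :=
              ae_restrict_of_ae (by
                rw [ae_iff]
                simpa [not_not] using measure_singleton (α := ℝ) (μ := volume) t₀)
            filter_upwards [hne, ae_restrict_mem measurableSet_Ioc] with τ hτne hmem
            rcases lt_or_gt_of_ne hτne with hlt | hgt
            · -- τ < t₀
              have hτ0 : 0 ≤ τ := hs.trans hmem.1.le
              have hFt₀ : F t₀ τ = Vn n t₀ τ (g τ) := by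
                simp only [hF]; exact Set.indicator_of_mem (Set.mem_Ioc.2 ⟨hmem.1, hlt.le⟩) _
              have hev : (fun t => F t τ) =ᶠ[𝓝[Set.Icc s T] t₀] (fun t => Vn n t τ (g τ)) := by
                filter_upwards [eventually_nhdsWithin_of_eventually_nhds
                  (eventually_gt_nhds hlt)] with t htgt
                simp only [hF]; exact Set.indicator_of_mem (Set.mem_Ioc.2 ⟨hmem.1, htgt.le⟩) _
              have e1 : 𝓝[Set.Ioi τ ∩ Set.Icc s T] t₀ = 𝓝[Set.Icc s T] t₀ :=
                nhdsWithin_inter_of_mem (mem_nhdsWithin_of_mem_nhds (Ioi_mem_nhds hlt))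
              have e2 : 𝓝[Set.Ioi τ ∩ Set.Icc s T] t₀ ≤ 𝓝[Set.Ici τ] t₀ :=
                nhdsWithin_mono _ (fun x hx => Set.mem_Ici.2 (le_of_lt (Set.mem_Ioi.1 hx.1)))
              have hlim : Tendsto (fun t => Vn n t τ (g τ)) (𝓝[Set.Icc s T] t₀)
                  (𝓝 (Vn n t₀ τ (g τ))) :=
                ((IH.1 τ hτ0 (g τ)) t₀ hlt.le).tendsto.mono_left (e1 ▸ e2)
              rw [hFt₀]
              exact hlim.congr' hev.symm
            · -- τ > t₀
              have hFt₀ : F t₀ τ = 0 := by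
                simp only [hF]
                exact Set.indicator_of_notMem (fun hc => absurd hc.2 (not_le.2 hgt)) _
              have hev : (fun t => F t τ) =ᶠ[𝓝[Set.Icc s T] t₀] (fun _ => (0:E)) := by
                filter_upwards [eventually_nhdsWithin_of_eventually_nhds
                  (eventually_lt_nhds hgt)] with t htlt
                simp only [hF]
                exact Set.indicator_of_notMem (fun hc => absurd hc.2 (not_le.2 htlt)) _
              rw [hFt₀]
              exact tendsto_const_nhds.congr' hev.symm
        -- assemble
        have final : Tendsto (fun t => Vn (n+1) t s u) (𝓝[Set.Icc s T] t₀)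
            (𝓝 (Vn (n+1) t₀ s u)) := by
          rw [hVF t₀ ht₀ ht₀T.le]
          apply main.congr'
          filter_upwards [self_mem_nhdsWithin] with t htm
          exact (hVF t htm.1 htm.2).symm
        exact final.mono_left (le_of_eq hfilt)
      intro s hs u
      obtain ⟨v, w, hv, hw, rfl⟩ := S.generating u
      have hsub : (fun t => Vn (n+1) t s (v - w))
          = fun t => Vn (n+1) t s v - Vn (n+1) t s w := by
        funext t; exact map_sub _ _ _
      rw [hsub]
      exact (key s hs v hv).sub (key s hs w hw)
    · -- part (c) for n+1
      intro r t hr hrt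
      have key : ∀ u, u ∈ S.pos →
          ContinuousOn (fun s => Vn (n+1) t s u) (Set.Ioo r t) := by
        intro u hu s₀ hs₀
        have hs₀0 : 0 ≤ s₀ := hr.trans hs₀.1.le
        have hint : ∀ a : ℝ, 0 ≤ a → a < t →
            IntervalIntegrable (fun τ => Vn n t τ (S.B τ (S.U τ a u))) volume a t := by
          intro a ha hat
          rw [intervalIntegrable_iff_integrableOn_Ioc_of_le hat.le]
          exact PS_integrand_integrable S Vn hu ha hat.le hM (fun w => IH.2 a t ha hat w)
        -- LEFT continuity (within Ioc r s₀)
        have left : ContinuousWithinAt (fun s => Vn (n+1) t s u) (Set.Ioc r s₀) s₀ := by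
          have ident : ∀ s ∈ Set.Ioc r s₀, Vn (n+1) t s u =
              (∫ τ in s..s₀, Vn n t τ (S.B τ (S.U τ s u)))
                + Vn (n+1) t s₀ (S.U s₀ s u) := by
            intro s hsm
            have hs0 : 0 ≤ s := hr.trans hsm.1.le
            have hst : s ≤ t := hsm.2.trans hs₀.2.le
            have hii := hint s hs0 (lt_of_le_of_lt hsm.2 hs₀.2)
            have hsub1 : Set.uIcc s s₀ ⊆ Set.uIcc s t := by
              rw [Set.uIcc_of_le hsm.2, Set.uIcc_of_le hst]
              exact Set.Icc_subset_Icc le_rfl hs₀.2.le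
            have hsub2 : Set.uIcc s₀ t ⊆ Set.uIcc s t := by
              rw [Set.uIcc_of_le hs₀.2.le, Set.uIcc_of_le hst]
              exact Set.Icc_subset_Icc hsm.2 le_rfl
            have hsplit := intervalIntegral.integral_add_adjacent_intervals
              (hii.mono_set hsub1) (hii.mono_set hsub2)
            rw [hVnrec n t s hs0 hst u, ← hsplit]
            congr 1
            rw [hVnrec n t s₀ hs₀0 hs₀.2.le (S.U s₀ s u)]
            apply intervalIntegral.integral_congr
            intro τ hτ
            rw [Set.uIcc_of_le hs₀.2.le] at hτ
            have hcomp := S.U_comp τ s₀ s hs0 hsm.2 hτ.1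
            simp only [← hcomp]
          -- the U-limit
          have hUc : Tendsto (fun s => S.U s₀ s u) (𝓝[Set.Ioc r s₀] s₀) (𝓝 u) := by
            have hm : Tendsto (fun s : ℝ => ((s₀, s) : ℝ × ℝ)) (𝓝[Set.Ioc r s₀] s₀)
                (𝓝[{p : ℝ × ℝ | 0 ≤ p.2 ∧ p.2 ≤ p.1}] (s₀, s₀)) := by
              apply tendsto_nhdsWithin_of_tendsto_nhds_of_eventually_within
              · exact (((continuous_const.prodMk continuous_id).tendsto'
                  s₀ (s₀, s₀) rfl)).mono_left nhdsWithin_le_nhds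
              · filter_upwards [self_mem_nhdsWithin] with s hsm
                exact ⟨hr.trans hsm.1.le, hsm.2⟩
            have h2 := (((S.U_cont u) (s₀, s₀) ⟨hs₀0, le_refl _⟩).tendsto).comp hm
            simpa [Function.comp_def, S.U_id s₀ hs₀0 u] using h2
          have tend2 : Tendsto (fun s => Vn (n+1) t s₀ (S.U s₀ s u))
              (𝓝[Set.Ioc r s₀] s₀) (𝓝 (Vn (n+1) t s₀ u)) :=
            ((Vn (n+1) t s₀).continuous.tendsto u).comp hUc
          have tend1 : Tendsto (fun s => ∫ τ in s..s₀, Vn n t τ (S.B τ (S.U τ s u)))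
              (𝓝[Set.Ioc r s₀] s₀) (𝓝 0) := by
            rw [tendsto_zero_iff_norm_tendsto_zero]
            apply squeeze_zero' (Eventually.of_forall fun _ => norm_nonneg _)
              (g := fun s => ‖u‖ - ‖S.U s₀ s u‖)
            · filter_upwards [self_mem_nhdsWithin] with s hsm
              have hs0 : 0 ≤ s := hr.trans hsm.1.le
              calc ‖∫ τ in s..s₀, Vn n t τ (S.B τ (S.U τ s u))‖
                  ≤ ∫ τ in Set.Ioc s s₀, ‖Vn n t τ (S.B τ (S.U τ s u))‖ := by
                    rw [intervalIntegral.integral_of_le hsm.2]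
                    exact norm_integral_le_integral_norm _
                _ ≤ ∫ τ in Set.Ioc s s₀, ‖S.B τ (S.U τ s u)‖ := by
                    apply integral_mono_of_nonneg
                      (Eventually.of_forall fun τ => norm_nonneg _)
                      ((S.BU_integrable u hu s s₀ hs0 hsm.2).norm)
                    filter_upwards [PS_gfacts S hu s₀ hs0,
                      ae_restrict_mem measurableSet_Ioc] with τ hgf hmem
                    exact hcontr n t τ (hs0.trans hmem.1.le)
                      (hmem.2.trans hs₀.2.le) _ hgf.2
                _ ≤ ‖u‖ - ‖S.U s₀ s u‖ := by
                    rw [← intervalIntegral.integral_of_le hsm.2]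
                    exact S.BU_int u hu s s₀ hs0 hsm.2
            · have := (tendsto_const_nhds (x := ‖u‖)
                (f := 𝓝[Set.Ioc r s₀] s₀)).sub hUc.norm
              simpa using this
          have hfin : Tendsto (fun s => Vn (n+1) t s u) (𝓝[Set.Ioc r s₀] s₀)
              (𝓝 (Vn (n+1) t s₀ u)) := by
            have hsum := tend1.add tend2
            rw [zero_add] at hsum
            apply hsum.congr'
            filter_upwards [self_mem_nhdsWithin] with s hsm
            exact (ident s hsm).symm
          exact hfin
        -- RIGHT continuity (within Ico s₀ t)
        have right : ContinuousWithinAt (fun s => Vn (n+1) t s u) (Set.Ico s₀ t) s₀ := by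
          have ident : ∀ s ∈ Set.Ico s₀ t, Vn (n+1) t s u - Vn (n+1) t s₀ u =
              Vn (n+1) t s (u - S.U s s₀ u)
                - ∫ τ in s₀..s, Vn n t τ (S.B τ (S.U τ s₀ u)) := by
            intro s hsm
            have hs0 : 0 ≤ s := hs₀0.trans hsm.1
            have hii := hint s₀ hs₀0 hs₀.2
            have hsub1 : Set.uIcc s₀ s ⊆ Set.uIcc s₀ t := by
              rw [Set.uIcc_of_le hsm.1, Set.uIcc_of_le hs₀.2.le]
              exact Set.Icc_subset_Icc le_rfl hsm.2.le
            have hsub2 : Set.uIcc s t ⊆ Set.uIcc s₀ t := by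
              rw [Set.uIcc_of_le hsm.2.le, Set.uIcc_of_le hs₀.2.le]
              exact Set.Icc_subset_Icc hsm.1 le_rfl
            have hsplit := intervalIntegral.integral_add_adjacent_intervals
              (hii.mono_set hsub1) (hii.mono_set hsub2)
            have e1 : (∫ τ in s..t, Vn n t τ (S.B τ (S.U τ s₀ u)))
                = Vn (n+1) t s (S.U s s₀ u) := by
              rw [hVnrec n t s hs0 hsm.2.le (S.U s s₀ u)]
              apply intervalIntegral.integral_congr
              intro τ hτ
              rw [Set.uIcc_of_le hsm.2.le] at hτ
              have hcomp := S.U_comp τ s s₀ hs₀0 hsm.1 hτ.1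
              simp only [← hcomp]
            have e2 : Vn (n+1) t s₀ u =
                (∫ τ in s₀..s, Vn n t τ (S.B τ (S.U τ s₀ u)))
                  + Vn (n+1) t s (S.U s s₀ u) := by
              rw [hVnrec n t s₀ hs₀0 hs₀.2.le u, ← hsplit, e1]
            rw [e2, map_sub]
            abel
          have hUc2 : Tendsto (fun s => S.U s s₀ u) (𝓝[Set.Ico s₀ t] s₀) (𝓝 u) := by
            have hm : Tendsto (fun s : ℝ => ((s, s₀) : ℝ × ℝ)) (𝓝[Set.Ico s₀ t] s₀)
                (𝓝[{p : ℝ × ℝ | 0 ≤ p.2 ∧ p.2 ≤ p.1}] (s₀, s₀)) := by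
              apply tendsto_nhdsWithin_of_tendsto_nhds_of_eventually_within
              · exact (((continuous_id.prodMk continuous_const).tendsto'
                  s₀ (s₀, s₀) rfl)).mono_left nhdsWithin_le_nhds
              · filter_upwards [self_mem_nhdsWithin] with s hsm
                exact ⟨hs₀0, hsm.1⟩
            have h2 := (((S.U_cont u) (s₀, s₀) ⟨hs₀0, le_refl _⟩).tendsto).comp hm
            simpa [Function.comp_def, S.U_id s₀ hs₀0 u] using h2
          have term1 : Tendsto (fun s => Vn (n+1) t s (u - S.U s s₀ u))
              (𝓝[Set.Ico s₀ t] s₀) (𝓝 0) := by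
            rw [tendsto_zero_iff_norm_tendsto_zero]
            apply squeeze_zero' (Eventually.of_forall fun _ => norm_nonneg _)
              (g := fun s => M * ‖u - S.U s s₀ u‖)
            · filter_upwards [self_mem_nhdsWithin] with s hsm
              exact hM (n+1) t s (hs₀0.trans hsm.1) hsm.2.le _
            · have h0 : Tendsto (fun s => u - S.U s s₀ u) (𝓝[Set.Ico s₀ t] s₀)
                  (𝓝 (u - u)) := tendsto_const_nhds.sub hUc2
              rw [sub_self] at h0
              have := h0.norm.const_mul M
              simpa using this
          have term2 : Tendsto (fun s => ∫ τ in s₀..s, Vn n t τ (S.B τ (S.U τ s₀ u)))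
              (𝓝[Set.Ico s₀ t] s₀) (𝓝 0) := by
            rw [tendsto_zero_iff_norm_tendsto_zero]
            apply squeeze_zero' (Eventually.of_forall fun _ => norm_nonneg _)
              (g := fun s => ‖u‖ - ‖S.U s s₀ u‖)
            · filter_upwards [self_mem_nhdsWithin] with s hsm
              calc ‖∫ τ in s₀..s, Vn n t τ (S.B τ (S.U τ s₀ u))‖
                  ≤ ∫ τ in Set.Ioc s₀ s, ‖Vn n t τ (S.B τ (S.U τ s₀ u))‖ := by
                    rw [intervalIntegral.integral_of_le hsm.1]
                    exact norm_integral_le_integral_norm _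
                _ ≤ ∫ τ in Set.Ioc s₀ s, ‖S.B τ (S.U τ s₀ u)‖ := by
                    apply integral_mono_of_nonneg
                      (Eventually.of_forall fun τ => norm_nonneg _)
                      ((S.BU_integrable u hu s₀ s hs₀0 hsm.1).norm)
                    filter_upwards [PS_gfacts S hu s hs₀0,
                      ae_restrict_mem measurableSet_Ioc] with τ hgf hmem
                    exact hcontr n t τ (hs₀0.trans hmem.1.le)
                      (hmem.2.trans hsm.2.le) _ hgf.2
                _ ≤ ‖u‖ - ‖S.U s s₀ u‖ := by
                    rw [← intervalIntegral.integral_of_le hsm.1]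
                    exact S.BU_int u hu s₀ s hs₀0 hsm.1
            · have := (tendsto_const_nhds (x := ‖u‖)
                (f := 𝓝[Set.Ico s₀ t] s₀)).sub hUc2.norm
              simpa using this
          have hdiff : Tendsto (fun s => Vn (n+1) t s u - Vn (n+1) t s₀ u)
              (𝓝[Set.Ico s₀ t] s₀) (𝓝 0) := by
            have hsum := term1.sub term2
            rw [sub_zero] at hsum
            apply hsum.congr'
            filter_upwards [self_mem_nhdsWithin] with s hsm
            exact (ident s hsm).symm
          have hfin : Tendsto (fun s => Vn (n+1) t s u) (𝓝[Set.Ico s₀ t] s₀)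
              (𝓝 (Vn (n+1) t s₀ u)) := by
            have := hdiff.add (tendsto_const_nhds (x := Vn (n+1) t s₀ u)
              (f := 𝓝[Set.Ico s₀ t] s₀))
            simpa using this
          exact hfin
        have hunion := left.union right
        exact hunion.mono (fun x hx => by
          by_cases h : x ≤ s₀
          · exact Or.inl ⟨hx.1, h⟩
          · exact Or.inr ⟨le_of_not_ge h, hx.2⟩)
      intro u
      obtain ⟨v, w, hv, hw, rfl⟩ := S.generating u
      have hsub : (fun s => Vn (n+1) t s (v - w))
          = fun s => Vn (n+1) t s v - Vn (n+1) t s w := by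
        funext s; exact map_sub _ _ _
      rw [hsub]
      exact (key v hv).sub (key w hw)

end PartBC

theorem honesty_stmt3 {E : Type*} [NormedAddCommGroup E] [NormedSpace ℝ E]
    [CompleteSpace E] (S : PerturbedSetting E)
    (Vn : ℕ → ℝ → ℝ → E →L[ℝ] E)
    (hVn0 : ∀ t s : ℝ, 0 ≤ s → s ≤ t → ∀ u : E, Vn 0 t s u = S.U t s u)
    (hVnrec : ∀ n : ℕ, ∀ t s : ℝ, 0 ≤ s → s ≤ t → ∀ u : E,
      Vn (n+1) t s u = ∫ r in s..t, Vn n t r (S.B r (S.U r s u)))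
    :
    (∀ n : ℕ, 1 ≤ n → ∀ t : ℝ, 0 ≤ t → ∀ u : E,
      Filter.Tendsto (fun h : ℝ => Vn n (t + h) t u)
        (nhdsWithin 0 (Set.Ioi 0)) (nhds 0)) ∧
    (∀ n : ℕ, ∀ s : ℝ, 0 ≤ s → ∀ u : E,
      ContinuousOn (fun t => Vn n t s u) (Set.Ici s)) ∧
    (∀ n : ℕ, ∀ r t : ℝ, 0 ≤ r → r < t → ∀ u : E,
      ContinuousOn (fun s => Vn n t s u) (Set.Ioo r t)) := by
  exact ⟨PS_partA S Vn hVn0 hVnrec,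
    fun n => (PS_partBC S Vn hVn0 hVnrec n).1,
    fun n => (PS_partBC S Vn hVn0 hVnrec n).2⟩
end

section
/- Let μ, Σ, b satisfy the kinetic assumptions (measurability, local integrability of t ↦ Σ(t,v), subcriticality ∫_V b(t,v,v') dμ(v) ≤ Σ(t,v') a.e.). Then for every nonnegative φ ∈ L¹(V,dμ) and every s ≥ 0: U_h(t,s)φ ∈ D(B_h(t)) for almost every t ≥ s; the map t ∈ [s,∞) ↦ B_h(t)U_h(t,s)φ ∈ L¹(V,dμ) is measurable; and for every t ≥ s, ∫_s^t ‖B_h(τ)U_h(τ,s)φ‖_{L¹(V,dμ)} dτ ≤ ‖φ‖_{L¹(V,dμ)} − ‖U_h(t,s)φ‖_{L¹(V,dμ)}, with equality whenever σ(t,v) = Σ(t,v) for almost every (t,v) ∈ ℝ₊ × V. -/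
open MeasureTheory Set Filter Topology
open scoped ENNReal

lemma expdiff {a b : ℝ} (ha : 0 ≤ a) (hb : 0 ≤ b) :
    |Real.exp (-a) - Real.exp (-b)| ≤ |a - b| := by
  wlog hab : a ≤ b generalizing a b
  · rw [abs_sub_comm, abs_sub_comm a b]; exact this hb ha (le_of_not_ge hab)
  have h1 : Real.exp (-b) ≤ Real.exp (-a) := Real.exp_le_exp.2 (by linarith)
  have h2 : Real.exp (-a) ≤ 1 := Real.exp_le_one_iff.2 (by linarith)
  have h3 : -(b - a) + 1 ≤ Real.exp (-(b - a)) := Real.add_one_le_exp _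
  have h4 : Real.exp (-b) = Real.exp (-a) * Real.exp (-(b - a)) := by
    rw [← Real.exp_add]; ring_nf
  have h5 : 0 < Real.exp (-a) := Real.exp_pos _
  rw [abs_of_nonneg (by linarith), abs_of_nonpos (by linarith)]
  nlinarith [Real.exp_pos (-(b-a))]

lemma key1d_cont (g : ℝ → ℝ) (hc : Continuous g) {s t : ℝ} (hst : s ≤ t) :
    ∫ τ in Set.Ioc s t, g τ * Real.exp (-(∫ r in s..τ, g r)) =
      1 - Real.exp (-(∫ r in s..t, g r)) := by
  set G : ℝ → ℝ := fun u => ∫ r in s..u, g r with hG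
  have hGc : Continuous G := intervalIntegral.continuous_primitive
    (fun a b => hc.intervalIntegrable a b) s
  have hderiv : ∀ τ : ℝ, HasDerivAt (fun u => -Real.exp (-G u))
      (g τ * Real.exp (-G τ)) τ := by
    intro τ
    have h1 : HasDerivAt G (g τ) τ :=
      (intervalIntegral.integral_hasStrictDerivAt_right (hc.intervalIntegrable _ _)
        hc.stronglyMeasurable.stronglyMeasurableAtFilter hc.continuousAt).hasDerivAt
    have h2 : HasDerivAt (fun u => -G u) (-g τ) τ := h1.neg
    have h3 : HasDerivAt (fun u => Real.exp (-G u)) (Real.exp (-G τ) * (-g τ)) τ := h2.exp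
    have := h3.neg
    exact this.congr_deriv (by ring)
  have hint : IntervalIntegrable (fun τ => g τ * Real.exp (-G τ)) volume s t :=
    (hc.mul (hGc.neg.rexp)).intervalIntegrable s t
  have := intervalIntegral.integral_eq_sub_of_hasDerivAt (fun τ _ => hderiv τ) hint
  rw [intervalIntegral.integral_of_le hst] at this
  rw [this]
  have hGs : G s = 0 := intervalIntegral.integral_same
  rw [hGs]
  simp only [neg_zero, Real.exp_zero, hG]
  ring

lemma key1d_glob (f : ℝ → ℝ) (hm : Measurable f) (hpos : ∀ r, 0 ≤ f r)
    (hint : Integrable f volume) {s t : ℝ} (hst : s ≤ t) :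
    ∫ τ in Set.Ioc s t, f τ * Real.exp (-(∫ r in s..τ, f r)) =
      1 - Real.exp (-(∫ r in s..t, f r)) := by
  set M : ℝ := ∫ x, f x with hM
  have hM0 : 0 ≤ M := integral_nonneg hpos
  set L : ℝ := ∫ τ in Set.Ioc s t, f τ * Real.exp (-(∫ r in s..τ, f r)) with hL
  set R : ℝ := 1 - Real.exp (-(∫ r in s..t, f r)) with hR
  have key : ∀ ε : ℝ, 0 < ε → ε ≤ 1 → |L - R| ≤ ε * (3 + M) := by
    intro ε hε hε1
    obtain ⟨h, hsupp, hdiff, hcont, hintg⟩ := hint.exists_hasCompactSupport_integral_sub_le hε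
    set h2 : ℝ → ℝ := fun x => max (h x) 0 with hh2
    have hc2 : Continuous h2 := hcont.max continuous_const
    have h2pos : ∀ x, 0 ≤ h2 x := fun x => le_max_right _ _
    have hint2 : Integrable h2 volume := hintg.pos_part
    have hfh2 : Integrable (fun x => f x - h2 x) volume := hint.sub hint2
    have hptw : ∀ x, |f x - h2 x| ≤ ‖f x - h x‖ := by
      intro x
      rcases le_or_gt (h x) 0 with hx | hx
      · have : h2 x = 0 := max_eq_right hx
        rw [this, Real.norm_eq_abs]
        rw [sub_zero, abs_of_nonneg (hpos x), abs_of_nonneg (by linarith [hpos x])]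
        linarith
      · have : h2 x = h x := max_eq_left hx.le
        rw [this, Real.norm_eq_abs]
    have hdiff2 : ∫ x, |f x - h2 x| ≤ ε := by
      refine le_trans (integral_mono hfh2.abs (hint.sub hintg).norm hptw) hdiff
    -- primitives
    set Gf : ℝ → ℝ := fun u => ∫ r in s..u, f r with hGf
    set Gh : ℝ → ℝ := fun u => ∫ r in s..u, h2 r with hGh
    have hGfc : Continuous Gf := hint.continuous_primitive s
    have hGhc : Continuous Gh := hint2.continuous_primitive s
    have hGfpos : ∀ τ, s ≤ τ → 0 ≤ Gf τ :=
      fun τ hτ => intervalIntegral.integral_nonneg hτ (fun r _ => hpos r)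
    have hGhpos : ∀ τ, s ≤ τ → 0 ≤ Gh τ :=
      fun τ hτ => intervalIntegral.integral_nonneg hτ (fun r _ => h2pos r)
    have hGdiff : ∀ τ, s ≤ τ → |Gf τ - Gh τ| ≤ ε := by
      intro τ hτ
      have e1 : Gf τ - Gh τ = ∫ r in Set.Ioc s τ, (f r - h2 r) := by
        rw [hGf, hGh]
        rw [← intervalIntegral.integral_of_le hτ, ← intervalIntegral.integral_sub
          (hint.intervalIntegrable) (hint2.intervalIntegrable)]
      rw [e1]
      calc |∫ r in Set.Ioc s τ, (f r - h2 r)| ≤ ∫ r in Set.Ioc s τ, |f r - h2 r| := by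
            simpa [Real.norm_eq_abs] using
              norm_integral_le_integral_norm (μ := volume.restrict (Set.Ioc s τ))
                (f := fun r => f r - h2 r)
        _ ≤ ∫ x, |f x - h2 x| := by
            refine setIntegral_le_integral hfh2.abs (Eventually.of_forall ?_)
            intro x; exact abs_nonneg _
        _ ≤ ε := hdiff2
    have hexpdiff : ∀ τ, s ≤ τ → |Real.exp (-Gf τ) - Real.exp (-Gh τ)| ≤ ε :=
      fun τ hτ => le_trans (expdiff (hGfpos τ hτ) (hGhpos τ hτ)) (hGdiff τ hτ)
    -- continuous case identity for h2
    have hLh : ∫ τ in Set.Ioc s t, h2 τ * Real.exp (-Gh τ) = 1 - Real.exp (-Gh t) :=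
      key1d_cont h2 hc2 hst
    -- R difference
    have hRdiff : |R - (1 - Real.exp (-Gh t))| ≤ ε := by
      rw [hR]
      have : 1 - Real.exp (-(∫ r in s..t, f r)) - (1 - Real.exp (-Gh t))
          = Real.exp (-Gh t) - Real.exp (-Gf t) := by rw [hGf]; ring
      rw [this, abs_sub_comm]
      exact hexpdiff t hst
    -- L difference
    have hintfe : IntegrableOn (fun τ => f τ * Real.exp (-Gf τ)) (Set.Ioc s t) volume := by
      refine Integrable.mono' (hint.restrict) ((hm.mul (hGfc.neg.measurable.exp)).aestronglyMeasurable) ?_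
      refine (ae_restrict_iff' measurableSet_Ioc).2 (Eventually.of_forall ?_)
      intro τ hτ
      rw [Real.norm_eq_abs, abs_of_nonneg (mul_nonneg (hpos τ) (Real.exp_pos _).le)]
      have : Real.exp (-Gf τ) ≤ 1 := Real.exp_le_one_iff.2 (by linarith [hGfpos τ hτ.1.le])
      nlinarith [hpos τ, Real.exp_pos (-Gf τ)]
    have hinthe : IntegrableOn (fun τ => h2 τ * Real.exp (-Gh τ)) (Set.Ioc s t) volume :=
      (hc2.mul (hGhc.neg.rexp)).integrableOn_Ioc
    have hLdiff : |L - ∫ τ in Set.Ioc s t, h2 τ * Real.exp (-Gh τ)| ≤ ε + ε * (M + ε) := by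
      have e1 : L - ∫ τ in Set.Ioc s t, h2 τ * Real.exp (-Gh τ)
          = ∫ τ in Set.Ioc s t, (f τ * Real.exp (-Gf τ) - h2 τ * Real.exp (-Gh τ)) := by
        rw [hL, integral_sub hintfe hinthe]
      rw [e1]
      have e2 : |∫ τ in Set.Ioc s t, (f τ * Real.exp (-Gf τ) - h2 τ * Real.exp (-Gh τ))|
          ≤ ∫ τ in Set.Ioc s t, |f τ * Real.exp (-Gf τ) - h2 τ * Real.exp (-Gh τ)| := by
        simpa [Real.norm_eq_abs] using
          norm_integral_le_integral_norm (μ := volume.restrict (Set.Ioc s t))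
            (f := fun τ => f τ * Real.exp (-Gf τ) - h2 τ * Real.exp (-Gh τ))
      refine le_trans e2 ?_
      have e3 : ∫ τ in Set.Ioc s t, |f τ * Real.exp (-Gf τ) - h2 τ * Real.exp (-Gh τ)|
          ≤ ∫ τ in Set.Ioc s t, (|f τ - h2 τ| + h2 τ * ε) := by
        refine setIntegral_mono_on ((hintfe.sub hinthe).abs)
          ((hfh2.abs.restrict).add ((hint2.restrict).mul_const ε)) measurableSet_Ioc ?_
        intro τ hτ
        have hτs : s ≤ τ := hτ.1.le
        have he1 : Real.exp (-Gf τ) ≤ 1 := Real.exp_le_one_iff.2 (by linarith [hGfpos τ hτs])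
        have he1p : 0 < Real.exp (-Gf τ) := Real.exp_pos _
        have heps : |Real.exp (-Gf τ) - Real.exp (-Gh τ)| ≤ ε := hexpdiff τ hτs
        have decomp : f τ * Real.exp (-Gf τ) - h2 τ * Real.exp (-Gh τ)
            = (f τ - h2 τ) * Real.exp (-Gf τ)
              + h2 τ * (Real.exp (-Gf τ) - Real.exp (-Gh τ)) := by ring
        rw [decomp]
        calc |(f τ - h2 τ) * Real.exp (-Gf τ)
              + h2 τ * (Real.exp (-Gf τ) - Real.exp (-Gh τ))|
            ≤ |(f τ - h2 τ) * Real.exp (-Gf τ)|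
              + |h2 τ * (Real.exp (-Gf τ) - Real.exp (-Gh τ))| := abs_add_le _ _
          _ = |f τ - h2 τ| * Real.exp (-Gf τ)
              + h2 τ * |Real.exp (-Gf τ) - Real.exp (-Gh τ)| := by
              rw [abs_mul, abs_mul, abs_of_nonneg he1p.le, abs_of_nonneg (h2pos τ)]
          _ ≤ |f τ - h2 τ| + h2 τ * ε := by
              refine add_le_add ?_ (mul_le_mul_of_nonneg_left heps (h2pos τ))
              nlinarith [abs_nonneg (f τ - h2 τ)]
      refine le_trans e3 ?_
      rw [integral_add (hfh2.abs.restrict) ((hint2.restrict).mul_const ε)]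
      have e4 : ∫ τ in Set.Ioc s t, |f τ - h2 τ| ≤ ε := by
        refine le_trans (setIntegral_le_integral hfh2.abs
          (Eventually.of_forall (fun x => abs_nonneg _))) hdiff2
      have e5 : ∫ τ in Set.Ioc s t, h2 τ * ε ≤ (M + ε) * ε := by
        rw [MeasureTheory.integral_mul_const]
        refine mul_le_mul_of_nonneg_right ?_ hε.le
        have e6 : ∫ τ in Set.Ioc s t, h2 τ ≤ ∫ τ in Set.Ioc s t, (f τ + |f τ - h2 τ|) := by
          refine integral_mono (hint2.restrict) ((hint.restrict).add (hfh2.abs.restrict)) ?_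
          intro τ
          have := abs_nonneg (f τ - h2 τ)
          have := neg_abs_le (f τ - h2 τ)
          simp only [Pi.add_apply]
          linarith
        rw [integral_add (hint.restrict) (hfh2.abs.restrict)] at e6
        have e7 : ∫ τ in Set.Ioc s t, f τ ≤ M :=
          setIntegral_le_integral hint (Eventually.of_forall (fun x => hpos x))
        linarith
      linarith
    calc |L - R| ≤ |L - ∫ τ in Set.Ioc s t, h2 τ * Real.exp (-Gh τ)|
          + |(∫ τ in Set.Ioc s t, h2 τ * Real.exp (-Gh τ)) - R| := abs_sub_le _ _ _
      _ ≤ (ε + ε * (M + ε)) + ε := by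
          refine add_le_add hLdiff ?_
          rw [hLh, abs_sub_comm]; exact hRdiff
      _ ≤ ε * (3 + M) := by nlinarith
  by_contra hne
  have habs : 0 < |L - R| := abs_pos.2 (sub_ne_zero.2 hne)
  set ε : ℝ := min 1 (|L - R| / (2 * (3 + M))) with hε
  have hεpos : 0 < ε := lt_min one_pos (by positivity)
  have := key ε hεpos (min_le_left _ _)
  have h2 : ε * (3 + M) ≤ |L - R| / 2 := by
    have : ε ≤ |L - R| / (2 * (3 + M)) := min_le_right _ _
    calc ε * (3 + M) ≤ (|L - R| / (2 * (3 + M))) * (3 + M) := by nlinarith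
      _ = |L - R| / 2 := by field_simp
  linarith

lemma key1d (g : ℝ → ℝ) (hm : Measurable g) (hpos : ∀ r, 0 ≤ g r) {s t : ℝ} (hst : s ≤ t)
    (hint : IntegrableOn g (Set.Ioc s t) volume) :
    ∫ τ in Set.Ioc s t, g τ * Real.exp (-(∫ r in s..τ, g r)) =
      1 - Real.exp (-(∫ r in s..t, g r)) := by
  set f := (Set.Ioc s t).indicator g with hf
  have hfm : Measurable f := hm.indicator measurableSet_Ioc
  have hfps : ∀ r, 0 ≤ f r := fun r => Set.indicator_nonneg (fun x _ => hpos x) r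
  have hfint : Integrable f volume := (integrable_indicator_iff measurableSet_Ioc).2 hint
  have hGeq : ∀ τ, s ≤ τ → τ ≤ t → (∫ r in s..τ, f r) = ∫ r in s..τ, g r := by
    intro τ h1 h2
    rw [intervalIntegral.integral_of_le h1, intervalIntegral.integral_of_le h1]
    refine setIntegral_congr_fun measurableSet_Ioc ?_
    intro r hr
    exact (Set.indicator_of_mem (Set.mem_of_mem_of_subset hr (Set.Ioc_subset_Ioc le_rfl h2)) g).symm ▸ rfl
  have hkey := key1d_glob f hfm hfps hfint hst
  rw [hGeq t hst le_rfl] at hkey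
  rw [← hkey]
  refine setIntegral_congr_fun measurableSet_Ioc ?_
  intro τ hτ
  simp only [hGeq τ hτ.1.le hτ.2, hf, Set.indicator_of_mem hτ]
  rw [← hf, hGeq τ hτ.1.le hτ.2]

theorem honesty_stmt14 {d : ℕ} (μ : Measure (EuclideanSpace ℝ (Fin d))) [SFinite μ]
    (Sig : ℝ → EuclideanSpace ℝ (Fin d) → ℝ)
    (b : ℝ → EuclideanSpace ℝ (Fin d) → EuclideanSpace ℝ (Fin d) → ℝ)
    (hSmeas : Measurable (Function.uncurry Sig))
    (hSpos : ∀ t v, 0 ≤ Sig t v)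
    (hSloc : ∀ᵐ v ∂μ, ∀ T : ℝ, IntegrableOn (fun t => Sig t v) (Set.Icc 0 T) volume)
    (hbmeas : Measurable (fun q : ℝ × EuclideanSpace ℝ (Fin d) × EuclideanSpace ℝ (Fin d) =>
      b q.1 q.2.1 q.2.2))
    (hbpos : ∀ t v v', 0 ≤ b t v v')
    (hsub : ∀ᵐ p : ℝ × EuclideanSpace ℝ (Fin d) ∂((volume.restrict (Set.Ici (0:ℝ))).prod μ),
      (∫⁻ v, ENNReal.ofReal (b p.1 v p.2) ∂μ) ≤ ENNReal.ofReal (Sig p.1 p.2))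
    (φ : EuclideanSpace ℝ (Fin d) → ℝ)
    (hφmeas : Measurable φ) (hφpos : ∀ v, 0 ≤ φ v) (hφint : Integrable φ μ)
    (s : ℝ) (hs : 0 ≤ s) :
    (∀ᵐ t ∂(volume.restrict (Set.Ici s)),
      (∫⁻ v, (∫⁻ v', ENNReal.ofReal (b t v' v) ∂μ) *
          ENNReal.ofReal (Real.exp (-(∫ τ in s..t, Sig τ v)) * φ v) ∂μ) < ⊤) ∧
    (AEMeasurable (fun p : ℝ × EuclideanSpace ℝ (Fin d) =>
        ∫⁻ v', ENNReal.ofReal (b p.1 p.2 v' * Real.exp (-(∫ τ in s..p.1, Sig τ v')) * φ v') ∂μ)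
      ((volume.restrict (Set.Ici s)).prod μ)) ∧
    (∀ t : ℝ, s ≤ t →
      (∫⁻ τ in Set.Ioc s t, ∫⁻ v, ∫⁻ v',
          ENNReal.ofReal (b τ v v' * Real.exp (-(∫ r in s..τ, Sig r v')) * φ v') ∂μ ∂μ)
        + ENNReal.ofReal (∫ v, Real.exp (-(∫ τ in s..t, Sig τ v)) * φ v ∂μ)
        ≤ ENNReal.ofReal (∫ v, φ v ∂μ)) ∧
    ((∀ᵐ p : ℝ × EuclideanSpace ℝ (Fin d) ∂((volume.restrict (Set.Ici (0:ℝ))).prod μ),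
        (∫⁻ v, ENNReal.ofReal (b p.1 v p.2) ∂μ) = ENNReal.ofReal (Sig p.1 p.2)) →
      ∀ t : ℝ, s ≤ t →
        (∫⁻ τ in Set.Ioc s t, ∫⁻ v, ∫⁻ v',
            ENNReal.ofReal (b τ v v' * Real.exp (-(∫ r in s..τ, Sig r v')) * φ v') ∂μ ∂μ)
          + ENNReal.ofReal (∫ v, Real.exp (-(∫ τ in s..t, Sig τ v)) * φ v ∂μ)
          = ENNReal.ofReal (∫ v, φ v ∂μ)) := by
  -- ## jointly measurable primitive of Sig
  set K : (ℝ × EuclideanSpace ℝ (Fin d)) × ℝ → ℝ :=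
    fun p => Set.indicator (Set.Ioc s p.1.1) (fun r => Sig r p.1.2) p.2 with hKdef
  have hKmeas : Measurable K := by
    have hset : MeasurableSet {p : (ℝ × EuclideanSpace ℝ (Fin d)) × ℝ | p.2 ∈ Set.Ioc s p.1.1} := by
      have : {p : (ℝ × EuclideanSpace ℝ (Fin d)) × ℝ | p.2 ∈ Set.Ioc s p.1.1}
          = {p : (ℝ × EuclideanSpace ℝ (Fin d)) × ℝ | s < p.2} ∩ {p : (ℝ × EuclideanSpace ℝ (Fin d)) × ℝ | p.2 ≤ p.1.1} := by
        ext p; simp [Set.mem_Ioc]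
      rw [this]
      exact (measurableSet_lt measurable_const measurable_snd).inter
        (measurableSet_le measurable_snd measurable_fst.fst)
    have : K = fun p : (ℝ × EuclideanSpace ℝ (Fin d)) × ℝ =>
        if p.2 ∈ Set.Ioc s p.1.1 then Sig p.2 p.1.2 else 0 := by
      funext p; rw [hKdef]; simp [Set.indicator_apply]
    rw [this]
    have hS2 : Measurable fun p : (ℝ × EuclideanSpace ℝ (Fin d)) × ℝ => Sig p.2 p.1.2 :=
      hSmeas.comp ((measurable_snd).prodMk (measurable_fst.snd))
    exact Measurable.ite hset hS2 measurable_const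
  set G2 : ℝ × EuclideanSpace ℝ (Fin d) → ℝ := fun q => ∫ r, K (q, r) with hG2def
  have hG2meas : Measurable G2 :=
    hKmeas.stronglyMeasurable.integral_prod_right'.measurable
  have hG2eq : ∀ (τ : ℝ) (v : EuclideanSpace ℝ (Fin d)), s ≤ τ → G2 (τ, v) = ∫ r in s..τ, Sig r v := by
    intro τ v hτ
    rw [intervalIntegral.integral_of_le hτ, ← integral_indicator measurableSet_Ioc]
  have hG2pos : ∀ q : ℝ × EuclideanSpace ℝ (Fin d), 0 ≤ G2 q := by
    intro q
    refine integral_nonneg fun r => ?_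
    simp only [Pi.zero_apply, hKdef]
    exact Set.indicator_nonneg (fun x _ => hSpos x _) r
  -- σ as an lintegral, and the exp-φ weight, in G2 form
  set S : ℝ × EuclideanSpace ℝ (Fin d) → ℝ≥0∞ := fun p => ∫⁻ v, ENNReal.ofReal (b p.1 v p.2) ∂μ with hSdef
  set E : ℝ × EuclideanSpace ℝ (Fin d) → ℝ≥0∞ :=
    fun p => ENNReal.ofReal (Real.exp (-(G2 p)) * φ p.2) with hEdef
  have hbm2 : Measurable (fun z : (ℝ × EuclideanSpace ℝ (Fin d)) × EuclideanSpace ℝ (Fin d) => ENNReal.ofReal (b z.1.1 z.2 z.1.2)) := by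
    exact ENNReal.measurable_ofReal.comp (hbmeas.comp
      ((measurable_fst.fst).prodMk ((measurable_snd).prodMk (measurable_fst.snd))))
  have hSmeas2 : Measurable S := by
    rw [hSdef]
    exact Measurable.lintegral_prod_right' (f := fun z : (ℝ × EuclideanSpace ℝ (Fin d)) × EuclideanSpace ℝ (Fin d) =>
      ENNReal.ofReal (b z.1.1 z.2 z.1.2)) hbm2
  have hEmeas : Measurable E := by
    rw [hEdef]
    exact ENNReal.measurable_ofReal.comp
      ((hG2meas.neg.exp).mul (hφmeas.comp (measurable_snd)))
  -- the triple integrand in G2 form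
  set T3 : (ℝ × EuclideanSpace ℝ (Fin d)) × EuclideanSpace ℝ (Fin d) → ℝ≥0∞ := fun z =>
    ENNReal.ofReal (b z.1.1 z.1.2 z.2 * Real.exp (-(G2 (z.1.1, z.2))) * φ z.2) with hT3def
  have hT3meas : Measurable T3 := by
    rw [hT3def]
    refine ENNReal.measurable_ofReal.comp ?_
    refine Measurable.mul (Measurable.mul ?_ ?_) (hφmeas.comp measurable_snd)
    · exact hbmeas.comp ((measurable_fst.fst).prodMk
        ((measurable_fst.snd).prodMk measurable_snd))
    · exact ((hG2meas.comp ((measurable_fst.fst).prodMk measurable_snd)).neg).exp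
  -- the G2-form triple integral in τ
  set H : ℝ → ℝ≥0∞ := fun τ => ∫⁻ v, ∫⁻ v', T3 ((τ, v), v') ∂μ ∂μ with hHdef
  have hswap : ∀ τ : ℝ, H τ = ∫⁻ v', S (τ, v') * E (τ, v') ∂μ := by
    intro τ
    have h1 : ∀ v v' : EuclideanSpace ℝ (Fin d), T3 ((τ, v), v')
        = ENNReal.ofReal (b τ v v') * E (τ, v') := by
      intro v v'
      rw [hT3def, hEdef]
      simp only
      rw [mul_assoc, ENNReal.ofReal_mul (hbpos _ _ _)]
    calc H τ = ∫⁻ v, ∫⁻ v', ENNReal.ofReal (b τ v v') * E (τ, v') ∂μ ∂μ := by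
          rw [hHdef]; simp only [h1]
      _ = ∫⁻ v', ∫⁻ v, ENNReal.ofReal (b τ v v') * E (τ, v') ∂μ ∂μ := by
          refine lintegral_lintegral_swap ?_
          refine Measurable.aemeasurable ?_
          refine Measurable.mul ?_ (hEmeas.comp (measurable_const.prodMk measurable_snd))
          exact ENNReal.measurable_ofReal.comp (hbmeas.comp
            (measurable_const.prodMk (measurable_fst.prodMk measurable_snd)))
      _ = ∫⁻ v', S (τ, v') * E (τ, v') ∂μ := by
          refine lintegral_congr fun v' => ?_
          rw [hSdef]
          exact lintegral_mul_const' _ _ ENNReal.ofReal_ne_top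
  have hHmeas : Measurable H := by
    rw [hHdef]
    have m1 : Measurable fun q : ℝ × EuclideanSpace ℝ (Fin d) => ∫⁻ v', T3 (q, v') ∂μ :=
      hT3meas.lintegral_prod_right'
    have m2 : Measurable fun z : ℝ × EuclideanSpace ℝ (Fin d) =>
        ∫⁻ v', T3 ((z.1, z.2), v') ∂μ := by
      exact m1.comp (measurable_fst.prodMk measurable_snd)
    exact m2.lintegral_prod_right'
  -- statement-form triple integral = (∫⁻ τ in Ioc, H τ)
  have hstat : ∀ t : ℝ, s ≤ t →
      (∫⁻ τ in Set.Ioc s t, ∫⁻ v, ∫⁻ v',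
          ENNReal.ofReal (b τ v v' * Real.exp (-(∫ r in s..τ, Sig r v')) * φ v') ∂μ ∂μ)
        = ∫⁻ τ in Set.Ioc s t, H τ := by
    intro t hst
    refine setLIntegral_congr_fun measurableSet_Ioc ?_
    intro τ hτ
    rw [hHdef]
    refine lintegral_congr fun v => ?_
    refine lintegral_congr fun v' => ?_
    rw [hT3def]
    simp only
    rw [hG2eq τ v' hτ.1.le]
  have hprod : ∀ t : ℝ, s ≤ t →
      (∫⁻ τ in Set.Ioc s t, H τ)
        = ∫⁻ p, S p * E p ∂((volume.restrict (Set.Ioc s t)).prod μ) := by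
    intro t hst
    calc (∫⁻ τ in Set.Ioc s t, H τ)
        = ∫⁻ τ in Set.Ioc s t, ∫⁻ v', S (τ, v') * E (τ, v') ∂μ := by
          exact lintegral_congr fun τ => hswap τ
      _ = ∫⁻ p, S p * E p ∂((volume.restrict (Set.Ioc s t)).prod μ) :=
          (lintegral_prod (fun p => S p * E p) (hSmeas2.mul hEmeas).aemeasurable).symm
  -- transfer of the subcriticality hypothesis
  have hACprod : ∀ t : ℝ, ((volume.restrict (Set.Ioc s t)).prod μ)
      ≪ ((volume.restrict (Set.Ici (0:ℝ))).prod μ) := by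
    intro t
    refine Measure.AbsolutelyContinuous.prod ?_ (Measure.AbsolutelyContinuous.refl μ)
    refine Measure.absolutelyContinuous_of_le ?_
    refine Measure.restrict_mono ?_ le_rfl
    intro x hx; exact le_trans hs hx.1.le
  -- helpers for the weight exp(-∫ Sig) φ
  have hexpφmeas : ∀ t : ℝ, s ≤ t →
      Measurable (fun v => Real.exp (-(∫ τ in s..t, Sig τ v)) * φ v) := by
    intro t ht
    have he : (fun v => Real.exp (-(∫ τ in s..t, Sig τ v)) * φ v)
        = fun v => Real.exp (-(G2 (t, v))) * φ v := by
      funext v; rw [hG2eq t v ht]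
    rw [he]
    exact ((hG2meas.comp (measurable_const.prodMk measurable_id)).neg.exp).mul hφmeas
  have hEφle : ∀ t : ℝ, s ≤ t → ∀ v, Real.exp (-(∫ τ in s..t, Sig τ v)) * φ v ≤ φ v := by
    intro t ht v
    have h1 : 0 ≤ ∫ τ in s..t, Sig τ v :=
      intervalIntegral.integral_nonneg ht (fun τ _ => hSpos τ v)
    have h2 : Real.exp (-(∫ τ in s..t, Sig τ v)) ≤ 1 := Real.exp_le_one_iff.2 (by linarith)
    nlinarith [hφpos v, Real.exp_pos (-(∫ τ in s..t, Sig τ v))]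
  have hEφpos : ∀ t : ℝ, ∀ v, 0 ≤ Real.exp (-(∫ τ in s..t, Sig τ v)) * φ v :=
    fun t v => mul_nonneg (Real.exp_pos _).le (hφpos v)
  have hEφint : ∀ t : ℝ, s ≤ t →
      Integrable (fun v => Real.exp (-(∫ τ in s..t, Sig τ v)) * φ v) μ := by
    intro t ht
    refine Integrable.mono' hφint (hexpφmeas t ht).aestronglyMeasurable ?_
    refine Eventually.of_forall fun v => ?_
    rw [Real.norm_eq_abs, abs_of_nonneg (hEφpos t v)]
    exact hEφle t ht v
  have hXle : ∀ t : ℝ, s ≤ t →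
      ENNReal.ofReal (∫ v, Real.exp (-(∫ τ in s..t, Sig τ v)) * φ v ∂μ)
        ≤ ENNReal.ofReal (∫ v, φ v ∂μ) := by
    intro t ht
    exact ENNReal.ofReal_le_ofReal
      (integral_mono (hEφint t ht) hφint (fun v => hEφle t ht v))
  -- the central computation with Sig in place of S
  have hSigE : ∀ t : ℝ, s ≤ t →
      (∫⁻ p, ENNReal.ofReal (Sig p.1 p.2) * E p ∂((volume.restrict (Set.Ioc s t)).prod μ))
        = ENNReal.ofReal (∫ v, φ v ∂μ)
          - ENNReal.ofReal (∫ v, Real.exp (-(∫ τ in s..t, Sig τ v)) * φ v ∂μ) := by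
    intro t hst
    have hfmeas : Measurable fun p : ℝ × EuclideanSpace ℝ (Fin d) =>
        ENNReal.ofReal (Sig p.1 p.2) * E p :=
      (ENNReal.measurable_ofReal.comp hSmeas).mul hEmeas
    rw [lintegral_prod_symm' _ hfmeas]
    -- inner computation for a.e. v'
    have hae : ∀ᵐ v' ∂μ,
        (∫⁻ τ in Set.Ioc s t, ENNReal.ofReal (Sig τ v') * E (τ, v'))
          = ENNReal.ofReal (φ v' - Real.exp (-(∫ r in s..t, Sig r v')) * φ v') := by
      filter_upwards [hSloc] with v' hloc
      have hSIoc : IntegrableOn (fun τ => Sig τ v') (Set.Ioc s t) volume := by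
        refine (hloc t).mono_set ?_
        intro x hx; exact ⟨le_trans hs hx.1.le, hx.2⟩
      have hgmeas : Measurable (fun τ => Sig τ v') :=
        hSmeas.comp (measurable_id.prodMk measurable_const)
      have hemeas : Measurable (fun τ => Real.exp (-(G2 (τ, v')))) :=
        ((hG2meas.comp (measurable_id.prodMk measurable_const)).neg).exp
      have hint : IntegrableOn (fun τ => Sig τ v' * Real.exp (-(G2 (τ, v'))))
          (Set.Ioc s t) volume := by
        refine Integrable.mono' hSIoc (hgmeas.mul hemeas).aestronglyMeasurable ?_
        refine Eventually.of_forall fun τ => ?_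
        rw [Real.norm_eq_abs, abs_of_nonneg (mul_nonneg (hSpos τ v') (Real.exp_pos _).le)]
        have h2 : Real.exp (-(G2 (τ, v'))) ≤ 1 :=
          Real.exp_le_one_iff.2 (by linarith [hG2pos (τ, v')])
        nlinarith [hSpos τ v', Real.exp_pos (-(G2 (τ, v')))]
      calc (∫⁻ τ in Set.Ioc s t, ENNReal.ofReal (Sig τ v') * E (τ, v'))
          = ∫⁻ τ in Set.Ioc s t, ENNReal.ofReal (φ v')
              * ENNReal.ofReal (Sig τ v' * Real.exp (-(G2 (τ, v')))) := by
            refine lintegral_congr fun τ => ?_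
            rw [hEdef]
            simp only
            rw [← ENNReal.ofReal_mul (hSpos τ v'), ← ENNReal.ofReal_mul (hφpos v')]
            congr 1
            ring
        _ = ENNReal.ofReal (φ v')
              * ∫⁻ τ in Set.Ioc s t, ENNReal.ofReal (Sig τ v' * Real.exp (-(G2 (τ, v')))) :=
            lintegral_const_mul' _ _ ENNReal.ofReal_ne_top
        _ = ENNReal.ofReal (φ v')
              * ENNReal.ofReal (∫ τ in Set.Ioc s t, Sig τ v' * Real.exp (-(G2 (τ, v')))) := by
            rw [← ofReal_integral_eq_lintegral_ofReal hint (Eventually.of_forall fun τ =>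
              mul_nonneg (hSpos τ v') (Real.exp_pos _).le)]
        _ = ENNReal.ofReal (φ v')
              * ENNReal.ofReal (1 - Real.exp (-(∫ r in s..t, Sig r v'))) := by
            congr 2
            have e1 : ∫ τ in Set.Ioc s t, Sig τ v' * Real.exp (-(G2 (τ, v')))
                = ∫ τ in Set.Ioc s t, Sig τ v' * Real.exp (-(∫ r in s..τ, Sig r v')) := by
              refine setIntegral_congr_fun measurableSet_Ioc fun τ hτ => ?_
              rw [hG2eq τ v' hτ.1.le]
            rw [e1]
            exact key1d _ hgmeas (fun r => hSpos r v') hst hSIoc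
        _ = ENNReal.ofReal (φ v' - Real.exp (-(∫ r in s..t, Sig r v')) * φ v') := by
            rw [← ENNReal.ofReal_mul (hφpos v')]
            congr 1
            ring
    rw [lintegral_congr_ae hae]
    have hsub_int : Integrable
        (fun v => φ v - Real.exp (-(∫ τ in s..t, Sig τ v)) * φ v) μ :=
      hφint.sub (hEφint t hst)
    have hsub_pos : 0 ≤ᵐ[μ] fun v => φ v - Real.exp (-(∫ τ in s..t, Sig τ v)) * φ v :=
      Eventually.of_forall fun v => by simp only [Pi.zero_apply]; linarith [hEφle t hst v]
    rw [← ofReal_integral_eq_lintegral_ofReal hsub_int hsub_pos]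
    rw [integral_sub hφint (hEφint t hst)]
    rw [ENNReal.ofReal_sub _ (integral_nonneg (fun v => hEφpos t v))]
  -- comparison between S and Sig
  have hcmp : ∀ t : ℝ, s ≤ t →
      (∫⁻ p, S p * E p ∂((volume.restrict (Set.Ioc s t)).prod μ))
        ≤ ∫⁻ p, ENNReal.ofReal (Sig p.1 p.2) * E p
            ∂((volume.restrict (Set.Ioc s t)).prod μ) := by
    intro t hst
    refine lintegral_mono_ae ?_
    have h := hsub.filter_mono (hACprod t).ae_le
    exact h.mono fun p hp => mul_le_mul_left hp _
  -- Part 3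
  have hP3 : ∀ t : ℝ, s ≤ t →
      (∫⁻ τ in Set.Ioc s t, ∫⁻ v, ∫⁻ v',
          ENNReal.ofReal (b τ v v' * Real.exp (-(∫ r in s..τ, Sig r v')) * φ v') ∂μ ∂μ)
        + ENNReal.ofReal (∫ v, Real.exp (-(∫ τ in s..t, Sig τ v)) * φ v ∂μ)
        ≤ ENNReal.ofReal (∫ v, φ v ∂μ) := by
    intro t hst
    rw [hstat t hst, hprod t hst]
    have h1 := le_trans (hcmp t hst) (le_of_eq (hSigE t hst))
    calc _ ≤ (ENNReal.ofReal (∫ v, φ v ∂μ)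
          - ENNReal.ofReal (∫ v, Real.exp (-(∫ τ in s..t, Sig τ v)) * φ v ∂μ))
          + ENNReal.ofReal (∫ v, Real.exp (-(∫ τ in s..t, Sig τ v)) * φ v ∂μ) :=
          add_le_add_left h1 _
      _ = ENNReal.ofReal (∫ v, φ v ∂μ) := tsub_add_cancel_of_le (hXle t hst)
  -- Part 4
  have hP4 : (∀ᵐ p : ℝ × EuclideanSpace ℝ (Fin d) ∂((volume.restrict (Set.Ici (0:ℝ))).prod μ),
        (∫⁻ v, ENNReal.ofReal (b p.1 v p.2) ∂μ) = ENNReal.ofReal (Sig p.1 p.2)) →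
      ∀ t : ℝ, s ≤ t →
        (∫⁻ τ in Set.Ioc s t, ∫⁻ v, ∫⁻ v',
            ENNReal.ofReal (b τ v v' * Real.exp (-(∫ r in s..τ, Sig r v')) * φ v') ∂μ ∂μ)
          + ENNReal.ofReal (∫ v, Real.exp (-(∫ τ in s..t, Sig τ v)) * φ v ∂μ)
          = ENNReal.ofReal (∫ v, φ v ∂μ) := by
    intro heq t hst
    rw [hstat t hst, hprod t hst]
    have hcongr : (∫⁻ p, S p * E p ∂((volume.restrict (Set.Ioc s t)).prod μ))
        = ∫⁻ p, ENNReal.ofReal (Sig p.1 p.2) * E p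
            ∂((volume.restrict (Set.Ioc s t)).prod μ) := by
      refine lintegral_congr_ae ?_
      have h := heq.filter_mono (hACprod t).ae_le
      exact h.mono fun p hp => by rw [hSdef]; simp only; rw [hp]
    rw [hcongr, hSigE t hst]
    exact tsub_add_cancel_of_le (hXle t hst)
  -- Part 1
  have hP1 : ∀ᵐ t ∂(volume.restrict (Set.Ici s)),
      (∫⁻ v, (∫⁻ v', ENNReal.ofReal (b t v' v) ∂μ) *
          ENNReal.ofReal (Real.exp (-(∫ τ in s..t, Sig τ v)) * φ v) ∂μ) < ⊤ := by
    have hIoc : ∀ n : ℕ, ∀ᵐ τ ∂(volume.restrict (Set.Ioc s (s + (n+1:ℝ)))),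
        (∫⁻ v, (∫⁻ v', ENNReal.ofReal (b τ v' v) ∂μ) *
          ENNReal.ofReal (Real.exp (-(∫ r in s..τ, Sig r v)) * φ v) ∂μ) < ⊤ := by
      intro n
      have hnn : (0:ℝ) ≤ (n:ℝ) := n.cast_nonneg
      have hst : s ≤ s + (n+1:ℝ) := by linarith
      have hfin : (∫⁻ τ in Set.Ioc s (s + (n+1:ℝ)), H τ) ≠ ⊤ := by
        have h2 := hP3 (s + (n+1:ℝ)) hst
        rw [hstat _ hst] at h2
        have h3 : (∫⁻ τ in Set.Ioc s (s+(n+1:ℝ)), H τ) ≤ ENNReal.ofReal (∫ v, φ v ∂μ) :=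
          le_trans le_self_add h2
        exact ne_top_of_le_ne_top ENNReal.ofReal_ne_top h3
      have h4 := ae_lt_top hHmeas hfin
      filter_upwards [h4, ae_restrict_mem measurableSet_Ioc] with τ hτlt hτmem
      have e1 : (∫⁻ v, (∫⁻ v', ENNReal.ofReal (b τ v' v) ∂μ) *
          ENNReal.ofReal (Real.exp (-(∫ r in s..τ, Sig r v)) * φ v) ∂μ) = H τ := by
        rw [hswap τ]
        refine lintegral_congr fun v => ?_
        rw [hSdef, hEdef]
        simp only
        rw [hG2eq τ v hτmem.1.le]
      rw [e1]; exact hτlt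
    have hU : (⋃ n : ℕ, Set.Ioc s (s + (n+1:ℝ))) = Set.Ioi s := by
      ext x
      simp only [Set.mem_iUnion, Set.mem_Ioc, Set.mem_Ioi]
      constructor
      · rintro ⟨n, h1, _⟩; exact h1
      · intro hx
        obtain ⟨n, hn⟩ := exists_nat_ge (x - s)
        exact ⟨n, hx, by push_cast; linarith⟩
    have hres : volume.restrict (Set.Ici s) = volume.restrict (Set.Ioi s) :=
      (Measure.restrict_congr_set Ioi_ae_eq_Ici).symm
    rw [hres, ← hU]
    exact (ae_restrict_iUnion_iff _ _).2 hIoc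
  -- Part 2
  have hP2 : AEMeasurable (fun p : ℝ × EuclideanSpace ℝ (Fin d) =>
        ∫⁻ v', ENNReal.ofReal (b p.1 p.2 v' * Real.exp (-(∫ τ in s..p.1, Sig τ v')) * φ v') ∂μ)
      ((volume.restrict (Set.Ici s)).prod μ) := by
    have hΦmeas : Measurable (fun p : ℝ × EuclideanSpace ℝ (Fin d) => ∫⁻ v', T3 (p, v') ∂μ) :=
      hT3meas.lintegral_prod_right'
    have hae1 : ∀ᵐ p : ℝ × EuclideanSpace ℝ (Fin d)
        ∂((volume.restrict (Set.Ici s)).prod μ), s ≤ p.1 := by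
      rw [ae_iff]
      have hset : {p : ℝ × EuclideanSpace ℝ (Fin d) | ¬ s ≤ p.1}
          = Set.Iio s ×ˢ Set.univ := by
        ext p; simp [not_le]
      rw [hset, Measure.prod_prod, Measure.restrict_apply measurableSet_Iio]
      have : Set.Iio s ∩ Set.Ici s = ∅ := by
        ext x; simp only [Set.mem_inter_iff, Set.mem_Iio, Set.mem_Ici, Set.mem_empty_iff_false,
          iff_false, not_and, not_le]
        intro h; exact h
      rw [this]
      simp
    refine (hΦmeas.aemeasurable).congr ?_
    filter_upwards [hae1] with p hp
    refine lintegral_congr fun v' => ?_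
    rw [hT3def]
    simp only
    rw [hG2eq p.1 v' hp]
  exact ⟨hP1, hP2, hP3, hP4⟩
end

section
/- Let μ, Σ, b satisfy the kinetic assumptions and fix t ≥ 0. If (φ_n)ₙ is a nondecreasing sequence of nonnegative functions in L¹(V,dμ) with φ_n ∈ D(B_h(t)) for every n, sup_n ∫_V σ(t,v) φ_n(v) dμ(v) < ∞, and φ_n → φ in L¹(V,dμ), then ∫_V σ(t,v) φ(v) dμ(v) < ∞ (i.e. φ ∈ D(B_h(t))) and B_h(t)φ_n → B_h(t)φ in L¹(V,dμ); i.e. the operators B_h(t) are increasingly closed. -/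
open MeasureTheory Set Filter Topology
open scoped ENNReal

theorem honesty_stmt15 {d : ℕ} (μ : Measure (EuclideanSpace ℝ (Fin d))) [SFinite μ]
    (Sig : ℝ → EuclideanSpace ℝ (Fin d) → ℝ)
    (b : ℝ → EuclideanSpace ℝ (Fin d) → EuclideanSpace ℝ (Fin d) → ℝ)
    (hSmeas : Measurable (Function.uncurry Sig))
    (hSpos : ∀ t v, 0 ≤ Sig t v)
    (hSloc : ∀ᵐ v ∂μ, ∀ T : ℝ, IntegrableOn (fun t => Sig t v) (Set.Icc 0 T) volume)
    (hbmeas : Measurable (fun q : ℝ × EuclideanSpace ℝ (Fin d) × EuclideanSpace ℝ (Fin d) =>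
      b q.1 q.2.1 q.2.2))
    (hbpos : ∀ t v v', 0 ≤ b t v v')
    (hsub : ∀ᵐ p : ℝ × EuclideanSpace ℝ (Fin d) ∂((volume.restrict (Set.Ici (0:ℝ))).prod μ),
      (∫⁻ v, ENNReal.ofReal (b p.1 v p.2) ∂μ) ≤ ENNReal.ofReal (Sig p.1 p.2))
    (t : ℝ) (ht : 0 ≤ t)
    (φn : ℕ → EuclideanSpace ℝ (Fin d) → ℝ) (φ : EuclideanSpace ℝ (Fin d) → ℝ)
    (hφnmeas : ∀ n, Measurable (φn n)) (hφnpos : ∀ n v, 0 ≤ φn n v)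
    (hφnint : ∀ n, Integrable (φn n) μ)
    (hmono : ∀ n, ∀ᵐ v ∂μ, φn n v ≤ φn (n+1) v)
    (hφmeas : Measurable φ) (hφint : Integrable φ μ)
    (hdom : ∀ n,
      (∫⁻ v, (∫⁻ v', ENNReal.ofReal (b t v' v) ∂μ) * ENNReal.ofReal (φn n v) ∂μ) < ⊤)
    (hsup : ∃ M : ℝ≥0∞, M < ⊤ ∧ ∀ n,
      (∫⁻ v, (∫⁻ v', ENNReal.ofReal (b t v' v) ∂μ) * ENNReal.ofReal (φn n v) ∂μ) ≤ M)
    (hconv : Filter.Tendsto (fun n => ∫ v, |φn n v - φ v| ∂μ) Filter.atTop (nhds 0)) :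
    (∫⁻ v, (∫⁻ v', ENNReal.ofReal (b t v' v) ∂μ) * ENNReal.ofReal (φ v) ∂μ) < ⊤ ∧
    Filter.Tendsto
      (fun n => ∫ v, |(∫ v', b t v v' * φn n v' ∂μ) - ∫ v', b t v v' * φ v' ∂μ| ∂μ)
      Filter.atTop (nhds 0) := by
  classical
  set σ' : EuclideanSpace ℝ (Fin d) → ℝ≥0∞ :=
    fun v => ∫⁻ v', ENNReal.ofReal (b t v' v) ∂μ with hσ'def
  -- basic measurability at fixed t
  have hb2 : Measurable fun p : EuclideanSpace ℝ (Fin d) × EuclideanSpace ℝ (Fin d) =>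
      b t p.1 p.2 := by
    have : Measurable fun p : EuclideanSpace ℝ (Fin d) × EuclideanSpace ℝ (Fin d) =>
        (t, p) := measurable_const.prodMk measurable_id
    exact hbmeas.comp this
  have hbe : Measurable fun p : EuclideanSpace ℝ (Fin d) × EuclideanSpace ℝ (Fin d) =>
      ENNReal.ofReal (b t p.1 p.2) := ENNReal.measurable_ofReal.comp hb2
  have hbe' : Measurable fun p : EuclideanSpace ℝ (Fin d) × EuclideanSpace ℝ (Fin d) =>
      ENNReal.ofReal (b t p.2 p.1) := hbe.comp measurable_swap
  have hσmeas : Measurable σ' := hbe'.lintegral_prod_right'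
  -- a.e. monotonicity
  have hmonoae : ∀ᵐ v ∂μ, Monotone fun n => φn n v := by
    have h := ae_all_iff.2 hmono
    filter_upwards [h] with v hv
    exact monotone_nat_of_le_succ hv
  -- L¹ convergence in eLpNorm form
  have hL1 : Tendsto (fun n => eLpNorm (φn n - φ) 1 μ) atTop (𝓝 0) := by
    have heq : ∀ n, eLpNorm (φn n - φ) 1 μ = ENNReal.ofReal (∫ v, |φn n v - φ v| ∂μ) := by
      intro n
      have hint : Integrable (fun v => |φn n v - φ v|) μ := by
        simpa [Pi.sub_apply] using ((hφnint n).sub hφint).abs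
      rw [eLpNorm_one_eq_lintegral_enorm,
        ofReal_integral_eq_lintegral_ofReal hint
          (Filter.Eventually.of_forall fun v => abs_nonneg _)]
      refine lintegral_congr fun v => ?_
      simp [Real.enorm_eq_ofReal_abs, Pi.sub_apply]
    simp only [heq]
    have := ENNReal.tendsto_ofReal hconv
    simpa using this
  -- a.e. convergence along a subsequence, hence (by monotonicity) a.e. convergence
  have haetendsto : ∀ᵐ v ∂μ, Tendsto (fun n => φn n v) atTop (𝓝 (φ v)) := by
    have htim : TendstoInMeasure μ φn atTop φ :=
      tendstoInMeasure_of_tendsto_eLpNorm one_ne_zero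
        (fun n => (hφnmeas n).aestronglyMeasurable) hφmeas.aestronglyMeasurable hL1
    obtain ⟨ns, hns, hae⟩ := htim.exists_seq_tendsto_ae
    filter_upwards [hae, hmonoae] with v hv hmv
    rcases tendsto_of_monotone hmv with h | ⟨l, hl⟩
    · exfalso
      have hsub' : Tendsto (fun i => φn (ns i) v) atTop atTop :=
        h.comp hns.tendsto_atTop
      exact not_tendsto_nhds_of_tendsto_atTop hsub' (φ v) hv
    · have hsub' : Tendsto (fun i => φn (ns i) v) atTop (𝓝 l) :=
        hl.comp hns.tendsto_atTop
      have hφl : φ v = l := tendsto_nhds_unique hv hsub'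
      rw [hφl]; exact hl
  -- a.e. domination φn n ≤ φ, a.e. nonnegativity of φ
  have hle : ∀ n, ∀ᵐ v ∂μ, φn n v ≤ φ v := by
    intro n
    filter_upwards [haetendsto, hmonoae] with v hv hmv
    exact hmv.ge_of_tendsto hv n
  have hleall : ∀ᵐ v ∂μ, ∀ n, φn n v ≤ φ v := ae_all_iff.2 hle
  have hφpos : ∀ᵐ v ∂μ, 0 ≤ φ v := by
    filter_upwards [haetendsto] with v hv
    exact ge_of_tendsto hv (Filter.Eventually.of_forall fun n => hφnpos n v)
  -- monotone convergence of the weighted integrals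
  set In : ℕ → ℝ≥0∞ := fun n => ∫⁻ v, σ' v * ENNReal.ofReal (φn n v) ∂μ with hIndef
  set I : ℝ≥0∞ := ∫⁻ v, σ' v * ENNReal.ofReal (φ v) ∂μ with hIdef
  have hImct : Tendsto In atTop (𝓝 I) := by
    apply lintegral_tendsto_of_tendsto_of_monotone
    · intro n
      exact (hσmeas.mul (ENNReal.measurable_ofReal.comp (hφnmeas n))).aemeasurable
    · filter_upwards [hmonoae] with v hv
      intro m k hmk
      exact mul_le_mul_right (ENNReal.ofReal_le_ofReal (hv hmk)) _
    · filter_upwards [haetendsto, hleall] with v hv hlev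
      by_cases hbad : σ' v = ⊤ ∧ φ v ≤ 0
      · have hz : ∀ n, φn n v = 0 := fun n => le_antisymm ((hlev n).trans hbad.2) (hφnpos n v)
        have hφz : ENNReal.ofReal (φ v) = 0 := by
          simpa using ENNReal.ofReal_le_ofReal hbad.2
        simp only [hz, ENNReal.ofReal_zero, mul_zero, hφz]
        exact tendsto_const_nhds
      · have hcond : ENNReal.ofReal (φ v) ≠ 0 ∨ σ' v ≠ ⊤ := by
          by_cases hσt : σ' v = ⊤
          · left
            have hφpos' : 0 < φ v := lt_of_not_ge fun h => hbad ⟨hσt, h⟩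
            simp [ENNReal.ofReal_eq_zero, not_le, hφpos']
          · exact Or.inr hσt
        exact ENNReal.Tendsto.const_mul
          ((ENNReal.continuous_ofReal.tendsto _).comp hv) hcond
  obtain ⟨M, hMlt, hMle⟩ := hsup
  have hIle : I ≤ M := le_of_tendsto hImct (Filter.Eventually.of_forall hMle)
  have hIlt : I < ⊤ := lt_of_le_of_lt hIle hMlt
  refine ⟨hIlt, ?_⟩
  -- the transposed kernels
  set L : EuclideanSpace ℝ (Fin d) → ℝ≥0∞ :=
    fun v => ∫⁻ v', ENNReal.ofReal (b t v v') * ENNReal.ofReal (φ v') ∂μ with hLdef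
  set Ln : ℕ → EuclideanSpace ℝ (Fin d) → ℝ≥0∞ :=
    fun n v => ∫⁻ v', ENNReal.ofReal (b t v v') * ENNReal.ofReal (φn n v') ∂μ with hLndef
  have hLmeas : Measurable L :=
    Measurable.lintegral_prod_right'
      (f := fun p => ENNReal.ofReal (b t p.1 p.2) * ENNReal.ofReal (φ p.2))
      (hbe.mul ((ENNReal.measurable_ofReal.comp hφmeas).comp measurable_snd))
  have hLnmeas : ∀ n, Measurable (Ln n) := fun n =>
    Measurable.lintegral_prod_right'
      (f := fun p => ENNReal.ofReal (b t p.1 p.2) * ENNReal.ofReal (φn n p.2))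
      (hbe.mul ((ENNReal.measurable_ofReal.comp (hφnmeas n)).comp measurable_snd))
  -- Tonelli
  have tonelli : ∀ ψ : EuclideanSpace ℝ (Fin d) → ℝ, Measurable ψ →
      (∫⁻ v, ∫⁻ v', ENNReal.ofReal (b t v v') * ENNReal.ofReal (ψ v') ∂μ ∂μ)
        = ∫⁻ v, σ' v * ENNReal.ofReal (ψ v) ∂μ := by
    intro ψ hψ
    rw [lintegral_lintegral_swap]
    · refine lintegral_congr fun v => ?_
      rw [hσ'def]
      exact lintegral_mul_const _ (hbe.comp (measurable_id.prodMk measurable_const))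
    · exact (hbe.mul ((ENNReal.measurable_ofReal.comp hψ).comp measurable_snd)).aemeasurable
  have hLint : (∫⁻ v, L v ∂μ) = I := tonelli φ hφmeas
  have hLnint : ∀ n, (∫⁻ v, Ln n v ∂μ) = In n := fun n => tonelli (φn n) (hφnmeas n)
  have hLnleL : ∀ n v, Ln n v ≤ L v := by
    intro n v
    refine lintegral_mono_ae ?_
    filter_upwards [hle n] with v' hv'
    exact mul_le_mul_right (ENNReal.ofReal_le_ofReal hv') _
  have hLfin : ∀ᵐ v ∂μ, L v < ⊤ := by
    apply ae_lt_top hLmeas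
    rw [hLint]; exact hIlt.ne
  -- the real-valued integrals
  set g : EuclideanSpace ℝ (Fin d) → ℝ := fun v => ∫ v', b t v v' * φ v' ∂μ with hgdef
  set gn : ℕ → EuclideanSpace ℝ (Fin d) → ℝ :=
    fun n v => ∫ v', b t v v' * φn n v' ∂μ with hgndef
  have hslice : ∀ v, Measurable fun v' => b t v v' :=
    fun v => hb2.comp (measurable_const.prodMk measurable_id)
  have hintφ : ∀ᵐ v ∂μ, Integrable (fun v' => b t v v' * φ v') μ := by
    filter_upwards [hLfin] with v hv
    refine ⟨((hslice v).mul hφmeas).aestronglyMeasurable, ?_⟩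
    rw [hasFiniteIntegral_iff_norm]
    have heqL : (∫⁻ v', ENNReal.ofReal ‖b t v v' * φ v'‖ ∂μ) = L v := by
      refine lintegral_congr_ae ?_
      filter_upwards [hφpos] with v' hv'
      rw [Real.norm_eq_abs, abs_of_nonneg (mul_nonneg (hbpos t v v') hv'),
        ENNReal.ofReal_mul (hbpos t v v')]
    rw [heqL]; exact hv
  have hintφn : ∀ n, ∀ᵐ v ∂μ, Integrable (fun v' => b t v v' * φn n v') μ := by
    intro n
    filter_upwards [hLfin] with v hv
    refine ⟨((hslice v).mul (hφnmeas n)).aestronglyMeasurable, ?_⟩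
    rw [hasFiniteIntegral_iff_norm]
    have heqL : (∫⁻ v', ENNReal.ofReal ‖b t v v' * φn n v'‖ ∂μ) = Ln n v := by
      refine lintegral_congr fun v' => ?_
      rw [Real.norm_eq_abs, abs_of_nonneg (mul_nonneg (hbpos t v v') (hφnpos n v')),
        ENNReal.ofReal_mul (hbpos t v v')]
    rw [heqL]; exact lt_of_le_of_lt (hLnleL n v) hv
  -- key a.e. identity: ofReal |gn - g| = L - Ln
  have hkey : ∀ n, ∀ᵐ v ∂μ, ENNReal.ofReal |gn n v - g v| = L v - Ln n v := by
    intro n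
    filter_upwards [hintφ, hintφn n] with v hvφ hvn
    have hgnle : gn n v ≤ g v := by
      refine integral_mono_ae hvn hvφ ?_
      filter_upwards [hle n] with v' hv'
      exact mul_le_mul_of_nonneg_left hv' (hbpos t v v')
    have hgnnn : 0 ≤ gn n v :=
      integral_nonneg fun v' => mul_nonneg (hbpos t v v') (hφnpos n v')
    have hofg : ENNReal.ofReal (g v) = L v := by
      rw [hgdef]
      rw [ofReal_integral_eq_lintegral_ofReal hvφ ?_]
      · refine lintegral_congr_ae ?_
        filter_upwards [hφpos] with v' hv'
        exact ENNReal.ofReal_mul (hbpos t v v')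
      · filter_upwards [hφpos] with v' hv'
        exact mul_nonneg (hbpos t v v') hv'
    have hofgn : ENNReal.ofReal (gn n v) = Ln n v := by
      rw [hgndef]
      rw [ofReal_integral_eq_lintegral_ofReal hvn
        (Filter.Eventually.of_forall fun v' => mul_nonneg (hbpos t v v') (hφnpos n v'))]
      exact lintegral_congr fun v' => ENNReal.ofReal_mul (hbpos t v v')
    rw [abs_sub_comm, abs_of_nonneg (sub_nonneg.2 hgnle),
      ENNReal.ofReal_sub _ hgnnn, hofg, hofgn]
  -- the ENNReal error term
  set A : ℕ → ℝ≥0∞ := fun n => ∫⁻ v, ENNReal.ofReal |gn n v - g v| ∂μ with hAdef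
  have hAeq : ∀ n, A n = I - In n := by
    intro n
    rw [hAdef]
    calc (∫⁻ v, ENNReal.ofReal |gn n v - g v| ∂μ)
        = ∫⁻ v, L v - Ln n v ∂μ := lintegral_congr_ae (hkey n)
      _ = (∫⁻ v, L v ∂μ) - ∫⁻ v, Ln n v ∂μ := by
          refine lintegral_sub (hLnmeas n) ?_ (Filter.Eventually.of_forall (hLnleL n))
          rw [hLnint n]
          exact (hdom n).ne
      _ = I - In n := by rw [hLint, hLnint n]
  have hA0 : Tendsto A atTop (𝓝 0) := by
    have hsub' : Tendsto (fun n => I - In n) atTop (𝓝 (I - I)) :=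
      ENNReal.Tendsto.sub tendsto_const_nhds hImct (Or.inl hIlt.ne)
    rw [tsub_self] at hsub'
    have hAfun : A = fun n => I - In n := funext hAeq
    rw [hAfun]; exact hsub'
  -- measurability of g, gn
  have hgSM : StronglyMeasurable g :=
    (hb2.mul (hφmeas.comp measurable_snd)).stronglyMeasurable.integral_prod_right'
  have hgnSM : ∀ n, StronglyMeasurable (gn n) := fun n =>
    (hb2.mul ((hφnmeas n).comp measurable_snd)).stronglyMeasurable.integral_prod_right'
  -- conclude
  have hfinal : ∀ n, (∫ v, |gn n v - g v| ∂μ) = (A n).toReal := by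
    intro n
    rw [hAdef]
    exact integral_eq_lintegral_of_nonneg_ae
      (Filter.Eventually.of_forall fun v => abs_nonneg _)
      (((hgnSM n).measurable.sub hgSM.measurable).abs).aestronglyMeasurable
  have htoReal : Tendsto (fun n => (A n).toReal) atTop (𝓝 0) := by
    have := (ENNReal.tendsto_toReal (by simp : (0:ℝ≥0∞) ≠ ⊤)).comp hA0
    exact this
  exact Tendsto.congr (fun n => (hfinal n).symm) htoReal
end

section
/- Let Ω ⊆ ℝ^d be open, μ a Borel measure on ℝ^d with support V, Λ = Ω × V, and let Σ satisfy the kinetic assumptions. For every nonnegative f ∈ L¹(Λ, dx⊗dμ(v)) and every s ≥ 0, one has ∫_Λ Σ(t,v) [U(t,s)f](x,v) dx dμ(v) < ∞ for almost every t ∈ [s,∞), where [U(t,s)f](x,v) = exp(−∫_s^t Σ(τ,v) dτ) f(x−(t−s)v, v) 1_{{t−s < τ(x,v)}} and τ(x,v) = inf{t > 0 : x − tv ∉ Ω}. -/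
open MeasureTheory Set Filter Topology
open scoped ENNReal

/-- Exit time of the point `x` with velocity `-v` from the open set `Ω`
(`+∞` if the backward ray stays in `Ω`). -/
noncomputable def exitTime {d : ℕ} (Ω : Set (EuclideanSpace ℝ (Fin d)))
    (x v : EuclideanSpace ℝ (Fin d)) : ℝ≥0∞ :=
  sInf (ENNReal.ofReal '' {t : ℝ | 0 < t ∧ x - t • v ∉ Ω})

/-- The free streaming (absorption) evolution family on `L¹(Ω × V)`:
`[U(t,s)f](x,v) = exp(-∫_s^t Σ(τ,v) dτ) f(x-(t-s)v, v) 1_{t-s < τ(x,v)}`. -/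
noncomputable def freeStream {d : ℕ} (Ω : Set (EuclideanSpace ℝ (Fin d)))
    (Sig : ℝ → EuclideanSpace ℝ (Fin d) → ℝ) (t s : ℝ)
    (f : EuclideanSpace ℝ (Fin d) × EuclideanSpace ℝ (Fin d) → ℝ)
    (p : EuclideanSpace ℝ (Fin d) × EuclideanSpace ℝ (Fin d)) : ℝ :=
  if ENNReal.ofReal (t - s) < exitTime Ω p.1 p.2 then
    Real.exp (-(∫ τ in s..t, Sig τ p.2)) * f (p.1 - (t - s) • p.2, p.2)
  else 0

/-! ### Auxiliary lemmas -/

lemma hon16_cdf_bound (ν : Measure ℝ) (s : ℝ) (hνs : ν (Set.Iic s) = 0) (C : ℝ≥0∞) :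
    ν {t | ν (Set.Ioc s t) < C} ≤ C := by
  set A : Set ℝ := {t | ν (Set.Ioc s t) < C} with hA
  have hsub : A ⊆ Set.Iic s ∪ (A ∩ Set.Ioi s) := by
    intro t ht
    rcases le_or_gt t s with h | h
    · exact Or.inl h
    · exact Or.inr ⟨ht, h⟩
  have hbound : ν (A ∩ Set.Ioi s) ≤ C := by
    by_cases hmax : ∃ m ∈ A ∩ Set.Ioi s, ∀ x ∈ A ∩ Set.Ioi s, x ≤ m
    · obtain ⟨m, hm, hle⟩ := hmax
      calc ν (A ∩ Set.Ioi s) ≤ ν (Set.Ioc s m) := by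
            apply measure_mono
            intro x hx
            exact ⟨hx.2, hle x hx⟩
        _ ≤ C := le_of_lt hm.1
    · push_neg at hmax
      set B : ℚ → Set ℝ := fun q => if ν (Set.Ioc s (q : ℝ)) < C then Set.Ioc s (q : ℝ) else ∅
        with hB
      have hBIoc : ∀ q : ℚ, B q ⊆ Set.Ioc s (q : ℝ) := by
        intro q
        simp only [hB]
        split
        · exact subset_rfl
        · exact Set.empty_subset _
      have hBeq : ∀ q : ℚ, ν (Set.Ioc s (q : ℝ)) < C → B q = Set.Ioc s (q : ℝ) := by
        intro q h
        simp only [hB, h, if_true]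
      have hBle : ∀ q : ℚ, ν (B q) ≤ C := by
        intro q
        by_cases h : ν (Set.Ioc s (q : ℝ)) < C
        · rw [hBeq q h]; exact h.le
        · simp only [hB, h, if_false]; simp
      have hcover : A ∩ Set.Ioi s ⊆ ⋃ q, B q := by
        intro x hx
        obtain ⟨y, hy, hxy⟩ := hmax x hx
        obtain ⟨q, hq1, hq2⟩ := exists_rat_btwn hxy
        have hql : ν (Set.Ioc s (q : ℝ)) < C :=
          lt_of_le_of_lt (measure_mono (Set.Ioc_subset_Ioc_right hq2.le)) hy.1
        refine Set.mem_iUnion.2 ⟨q, ?_⟩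
        rw [hBeq q hql]
        exact ⟨hx.2, hq1.le⟩
      have hdir : Directed (· ⊆ ·) B := by
        intro p q
        rcases le_total p q with h | h
        · by_cases hq : ν (Set.Ioc s (q : ℝ)) < C
          · refine ⟨q, ?_, subset_rfl⟩
            rw [hBeq q hq]
            exact (hBIoc p).trans (Set.Ioc_subset_Ioc_right (by exact_mod_cast h))
          · refine ⟨p, subset_rfl, ?_⟩
            simp only [hB, hq, if_false]
            exact Set.empty_subset _
        · by_cases hp : ν (Set.Ioc s (p : ℝ)) < C
          · refine ⟨p, subset_rfl, ?_⟩
            rw [hBeq p hp]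
            exact (hBIoc q).trans (Set.Ioc_subset_Ioc_right (by exact_mod_cast h))
          · refine ⟨q, ?_, subset_rfl⟩
            simp only [hB, hp, if_false]
            exact Set.empty_subset _
      calc ν (A ∩ Set.Ioi s) ≤ ν (⋃ q, B q) := measure_mono hcover
        _ = ⨆ q, ν (B q) := hdir.measure_iUnion
        _ ≤ C := iSup_le hBle
  calc ν A ≤ ν (Set.Iic s ∪ (A ∩ Set.Ioi s)) := measure_mono hsub
    _ ≤ ν (Set.Iic s) + ν (A ∩ Set.Ioi s) := measure_union_le _ _
    _ ≤ 0 + C := add_le_add (le_of_eq hνs) hbound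
    _ = C := zero_add C

lemma hon16_log_lintegral_lt_top :
    ∫⁻ u in Set.Ioi (0:ℝ), ENNReal.ofReal (-Real.log u) < ⊤ := by
  have hsplit : Set.Ioi (0:ℝ) = Set.Ioo (0:ℝ) 1 ∪ Set.Ici (1:ℝ) := by
    ext x
    simp only [Set.mem_Ioi, Set.mem_union, Set.mem_Ioo, Set.mem_Ici]
    constructor
    · intro h
      rcases lt_or_ge x 1 with h1 | h1
      · exact Or.inl ⟨h, h1⟩
      · exact Or.inr h1
    · rintro (⟨h, _⟩ | h)
      · exact h
      · linarith
  rw [hsplit, lintegral_union measurableSet_Ici (by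
    intro S hS1 hS2 x hx
    exact absurd ((hS2 hx).trans_lt (hS1 hx).2) (lt_irrefl _) )]
  have h2 : ∫⁻ u in Set.Ici (1:ℝ), ENNReal.ofReal (-Real.log u) = 0 := by
    rw [setLIntegral_congr_fun measurableSet_Ici (fun u hu => ?_), lintegral_zero]
    exact ENNReal.ofReal_eq_zero.2 (neg_nonpos.2 (Real.log_nonneg hu))
  rw [h2, add_zero]
  have hint : IntegrableOn (fun u : ℝ => 2 * u ^ (-(1/2) : ℝ)) (Set.Ioo (0:ℝ) 1) volume := by
    exact ((intervalIntegral.integrableOn_Ioo_rpow_iff one_pos).2 (by norm_num)).const_mul 2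
  have hb : ∀ u ∈ Set.Ioo (0:ℝ) 1, ENNReal.ofReal (-Real.log u)
      ≤ ENNReal.ofReal (2 * u ^ (-(1/2) : ℝ)) := by
    intro u hu
    apply ENNReal.ofReal_le_ofReal
    have hw : (0:ℝ) < u ^ ((1/2) : ℝ) := Real.rpow_pos_of_pos hu.1 _
    have hlog : Real.log (u ^ ((1/2):ℝ)) = (1/2) * Real.log u := Real.log_rpow hu.1 _
    have h1 : -Real.log u = 2 * (Real.log (u ^ ((1/2):ℝ))⁻¹) := by
      rw [Real.log_inv, hlog]; ring
    have h2 : Real.log (u ^ ((1/2):ℝ))⁻¹ ≤ (u ^ ((1/2):ℝ))⁻¹ - 1 :=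
      Real.log_le_sub_one_of_pos (inv_pos.2 hw)
    have h3 : (u ^ ((1/2):ℝ))⁻¹ = u ^ (-(1/2) : ℝ) := (Real.rpow_neg hu.1.le _).symm
    rw [h1]
    nlinarith [h2, h3]
  calc ∫⁻ u in Set.Ioo (0:ℝ) 1, ENNReal.ofReal (-Real.log u)
      ≤ ∫⁻ u in Set.Ioo (0:ℝ) 1, ENNReal.ofReal (2 * u ^ (-(1/2) : ℝ)) :=
        setLIntegral_mono_ae (by fun_prop) (ae_of_all _ hb)
    _ < ⊤ := by
        have := hint.hasFiniteIntegral
        rwa [hasFiniteIntegral_iff_ofReal ((ae_restrict_iff' measurableSet_Ioo).2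
          (ae_of_all _ (fun u hu => by have h0 : (0:ℝ) < u := hu.1; positivity)))] at this

lemma hon16_lint_ne_top_of_integrableOn {g : ℝ → ℝ} {S : Set ℝ}
    (h : IntegrableOn g S volume) : ∫⁻ τ in S, ENNReal.ofReal (g τ) ≠ ⊤ := by
  have h1 := h.hasFiniteIntegral
  refine ne_of_lt (lt_of_le_of_lt ?_ h1)
  exact lintegral_mono fun τ => Real.ofReal_le_enorm (g τ)

lemma hon16_intInt_eq_toReal {g : ℝ → ℝ} (hg : Measurable g) (hg0 : ∀ τ, 0 ≤ g τ) {s t : ℝ}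
    (hst : s ≤ t) :
    ∫ τ in s..t, g τ = (∫⁻ τ in Set.Ioc s t, ENNReal.ofReal (g τ)).toReal := by
  rw [intervalIntegral.integral_of_le hst]
  by_cases hint : IntegrableOn g (Set.Ioc s t) volume
  · rw [← ofReal_integral_eq_lintegral_ofReal hint (ae_of_all _ hg0),
      ENNReal.toReal_ofReal (integral_nonneg (fun τ => hg0 τ))]
  · rw [integral_undef hint]
    have htop : ∫⁻ τ in Set.Ioc s t, ENNReal.ofReal (g τ) = ⊤ := by
      by_contra h
      apply hint
      refine ⟨(hg.aestronglyMeasurable).restrict, ?_⟩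
      rw [hasFiniteIntegral_iff_ofReal (ae_of_all _ hg0)]
      exact lt_top_iff_ne_top.2 h
    rw [htop, ENNReal.toReal_top]

lemma hon16_absorb_bound (g : ℝ → ℝ) (hg : Measurable g) (s : ℝ)
    (hfin : ∀ t, (∫⁻ τ in Set.Ioc s t, ENNReal.ofReal (g τ)) ≠ ⊤) :
    ∫⁻ t in Set.Ici s, ENNReal.ofReal (g t) *
      ENNReal.ofReal (Real.exp (-((∫⁻ τ in Set.Ioc s t, ENNReal.ofReal (g τ)).toReal)))
      ≤ ∫⁻ u in Set.Ioi (0:ℝ), ENNReal.ofReal (-Real.log u) := by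
  set w : ℝ → ℝ≥0∞ := fun τ => ENNReal.ofReal (g τ) with hw
  set G : ℝ → ℝ := fun t => (∫⁻ τ in Set.Ioc s t, w τ).toReal with hGdef
  have hwm : Measurable w := ENNReal.measurable_ofReal.comp hg
  set ν : Measure ℝ := (volume.restrict (Set.Ici s)).withDensity w with hν
  have hνIoc : ∀ t, ν (Set.Ioc s t) = ∫⁻ τ in Set.Ioc s t, w τ := by
    intro t
    rw [hν, withDensity_apply _ measurableSet_Ioc,
      Measure.restrict_restrict measurableSet_Ioc]
    congr 1
    congr 1
    exact Set.inter_eq_left.2 (fun x hx => le_of_lt hx.1)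
  have hνIic : ν (Set.Iic s) = 0 := by
    rw [hν, withDensity_apply _ measurableSet_Iic,
      Measure.restrict_restrict measurableSet_Iic]
    have : Set.Iic s ∩ Set.Ici s = {s} := by
      rw [Set.Iic_inter_Ici, Set.Icc_self]
    rw [this, Measure.restrict_eq_zero.2 (by simp), lintegral_zero_measure]
  have hGmono : Monotone fun t => ∫⁻ τ in Set.Ioc s t, w τ := by
    intro a b hab
    exact lintegral_mono' (Measure.restrict_mono (Set.Ioc_subset_Ioc_right hab) le_rfl) le_rfl
  have hGm : Measurable G := ENNReal.measurable_toReal.comp hGmono.measurable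
  have hEm : Measurable fun t => Real.exp (-(G t)) := (Real.measurable_exp.comp hGm.neg)
  have hEm' : Measurable fun t => ENNReal.ofReal (Real.exp (-(G t))) :=
    ENNReal.measurable_ofReal.comp hEm
  calc ∫⁻ t in Set.Ici s, ENNReal.ofReal (g t) * ENNReal.ofReal (Real.exp (-(G t)))
      = ∫⁻ t, ENNReal.ofReal (Real.exp (-(G t))) ∂ν := by
        rw [hν, lintegral_withDensity_eq_lintegral_mul _ hwm hEm']
        rfl
    _ = ∫⁻ u in Set.Ioi (0:ℝ), ν {a | u < Real.exp (-(G a))} := by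
        exact lintegral_eq_lintegral_meas_lt ν (ae_of_all _ (fun t => (Real.exp_pos _).le))
          hEm.aemeasurable
    _ ≤ ∫⁻ u in Set.Ioi (0:ℝ), ENNReal.ofReal (-Real.log u) := by
        apply lintegral_mono_ae
        refine (ae_restrict_iff' measurableSet_Ioi).2 (ae_of_all _ (fun u hu => ?_))
        have hsubset : {a | u < Real.exp (-(G a))} ⊆
            {a | ν (Set.Ioc s a) < ENNReal.ofReal (-Real.log u)} := by
          intro a ha
          have h1 : Real.log u < -(G a) := by
            have := Real.log_lt_log hu ha
            rwa [Real.log_exp] at this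
          have h2 : G a < -Real.log u := by linarith
          rw [Set.mem_setOf_eq, hνIoc a]
          exact (ENNReal.lt_ofReal_iff_toReal_lt (hfin a)).2 h2
        exact le_trans (measure_mono hsubset) (hon16_cdf_bound ν s hνIic _)

/-- Joint measurability of `(t, v) ↦ ∫⁻_{(s,t]} Σ(τ,v) dτ`. -/
lemma hon16_G_measurable {d : ℕ} (Sig : ℝ → EuclideanSpace ℝ (Fin d) → ℝ)
    (hSmeas : Measurable (Function.uncurry Sig)) (s : ℝ) :
    Measurable (fun q : ℝ × EuclideanSpace ℝ (Fin d) =>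
      ∫⁻ τ in Set.Ioc s q.1, ENNReal.ofReal (Sig τ q.2)) := by
  have heq : (fun q : ℝ × EuclideanSpace ℝ (Fin d) =>
      ∫⁻ τ in Set.Ioc s q.1, ENNReal.ofReal (Sig τ q.2))
      = fun q => ∫⁻ τ, (Set.Ioc s q.1).indicator (fun τ => ENNReal.ofReal (Sig τ q.2)) τ := by
    funext q
    rw [lintegral_indicator measurableSet_Ioc]
  rw [heq]
  apply Measurable.lintegral_prod_right
    (f := fun (q : ℝ × EuclideanSpace ℝ (Fin d)) (τ : ℝ) =>
      (Set.Ioc s q.1).indicator (fun τ => ENNReal.ofReal (Sig τ q.2)) τ)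
  have : (Function.uncurry fun (q : ℝ × EuclideanSpace ℝ (Fin d)) (τ : ℝ) =>
      (Set.Ioc s q.1).indicator (fun τ => ENNReal.ofReal (Sig τ q.2)) τ)
      = fun r : (ℝ × EuclideanSpace ℝ (Fin d)) × ℝ =>
        if s < r.2 ∧ r.2 ≤ r.1.1 then ENNReal.ofReal (Sig r.2 r.1.2) else 0 := by
    funext r
    simp [Function.uncurry, Set.indicator_apply, Set.mem_Ioc]
  rw [this]
  refine Measurable.ite ?_ ?_ measurable_const
  · exact (measurableSet_lt measurable_const measurable_snd).inter
      (measurableSet_le measurable_snd measurable_fst.fst)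
  · exact ENNReal.measurable_ofReal.comp
      (hSmeas.comp (measurable_snd.prodMk measurable_fst.snd))

theorem honesty_stmt16 {d : ℕ} (μ : Measure (EuclideanSpace ℝ (Fin d))) [SFinite μ]
    (Ω : Set (EuclideanSpace ℝ (Fin d))) (hΩ : IsOpen Ω)
    (Sig : ℝ → EuclideanSpace ℝ (Fin d) → ℝ)
    (hSmeas : Measurable (Function.uncurry Sig))
    (hSpos : ∀ t v, 0 ≤ Sig t v)
    (hSloc : ∀ᵐ v ∂μ, ∀ T : ℝ, IntegrableOn (fun t => Sig t v) (Set.Icc 0 T) volume)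
    (f : EuclideanSpace ℝ (Fin d) × EuclideanSpace ℝ (Fin d) → ℝ)
    (hfmeas : Measurable f) (hfpos : ∀ p, 0 ≤ f p)
    (hfint : Integrable f ((volume.restrict Ω).prod μ))
    (s : ℝ) (hs : 0 ≤ s) :
    ∀ᵐ t ∂(volume.restrict (Set.Ici s)),
      (∫⁻ p, ENNReal.ofReal (Sig t p.2 * freeStream Ω Sig t s f p)
        ∂((volume.restrict Ω).prod μ)) < ⊤ := by
  classical
  set GG : ℝ → EuclideanSpace ℝ (Fin d) → ℝ :=
    fun t v => (∫⁻ τ in Set.Ioc s t, ENNReal.ofReal (Sig τ v)).toReal with hGG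
  set c : ℝ → EuclideanSpace ℝ (Fin d) → ℝ≥0∞ :=
    fun t v => ENNReal.ofReal (Sig t v) * ENNReal.ofReal (Real.exp (-(GG t v))) with hc
  set ψ : EuclideanSpace ℝ (Fin d) × EuclideanSpace ℝ (Fin d) → ℝ≥0∞ :=
    fun p => Set.indicator Ω (fun _ => (1:ℝ≥0∞)) p.1 * ENNReal.ofReal (f p) with hψ
  set H : ℝ → EuclideanSpace ℝ (Fin d) × EuclideanSpace ℝ (Fin d) → ℝ≥0∞ :=
    fun t p => c t p.2 * ψ (p.1 - (t - s) • p.2, p.2) with hH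
  set F : EuclideanSpace ℝ (Fin d) → ℝ≥0∞ :=
    fun v => ∫⁻ x, ψ (x, v) ∂(volume : Measure (EuclideanSpace ℝ (Fin d))) with hF
  -- measurability facts
  have hGGm : Measurable (fun q : ℝ × EuclideanSpace ℝ (Fin d) => GG q.1 q.2) :=
    ENNReal.measurable_toReal.comp (hon16_G_measurable Sig hSmeas s)
  have hcm : Measurable (fun q : ℝ × EuclideanSpace ℝ (Fin d) => c q.1 q.2) := by
    refine Measurable.mul (f := fun q : ℝ × EuclideanSpace ℝ (Fin d) => ENNReal.ofReal (Sig q.1 q.2))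
      (g := fun q : ℝ × EuclideanSpace ℝ (Fin d) => ENNReal.ofReal (Real.exp (-(GG q.1 q.2)))) ?_ ?_
    · exact ENNReal.measurable_ofReal.comp hSmeas
    · exact ENNReal.measurable_ofReal.comp (Real.measurable_exp.comp hGGm.neg)
  have hψm : Measurable ψ := by
    apply Measurable.mul
    · exact (measurable_const.indicator hΩ.measurableSet).comp measurable_fst
    · exact ENNReal.measurable_ofReal.comp hfmeas
  have hHm : Measurable (Function.uncurry H) := by
    apply Measurable.mul
    · exact hcm.comp (measurable_fst.prodMk measurable_snd.snd)
    · refine hψm.comp ?_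
      refine Measurable.prodMk ?_ measurable_snd.snd
      exact measurable_snd.fst.sub ((measurable_fst.sub measurable_const).smul measurable_snd.snd)
  have hFm : Measurable F := by
    apply Measurable.lintegral_prod_right (f := fun v x => ψ (x, v))
    exact hψm.comp (measurable_snd.prodMk measurable_fst)
  set h : ℝ → ℝ≥0∞ := fun t => ∫⁻ p, H t p ∂((volume.restrict Ω).prod μ) with hh
  have hhm : Measurable h := Measurable.lintegral_prod_right (f := H) hHm
  -- pointwise domination
  have hpb : ∀ t, s ≤ t → ∀ p : EuclideanSpace ℝ (Fin d) × EuclideanSpace ℝ (Fin d),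
      p.1 ∈ Ω → ENNReal.ofReal (Sig t p.2 * freeStream Ω Sig t s f p) ≤ H t p := by
    intro t ht p hp
    by_cases hcond : ENNReal.ofReal (t - s) < exitTime Ω p.1 p.2
    · have hy : p.1 - (t - s) • p.2 ∈ Ω := by
        rcases eq_or_lt_of_le ht with heq | hlt
        · have h0 : t - s = 0 := by rw [← heq]; ring
          rw [h0, zero_smul, sub_zero]
          exact hp
        · by_contra hny
          have hmem : ENNReal.ofReal (t - s) ∈
              ENNReal.ofReal '' {r : ℝ | 0 < r ∧ p.1 - r • p.2 ∉ Ω} :=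
            ⟨t - s, ⟨by linarith, hny⟩, rfl⟩
          exact absurd (csInf_le (OrderBot.bddBelow _) hmem) (not_le.2 hcond)
      have hI : ∫ τ in s..t, Sig τ p.2 = GG t p.2 :=
        hon16_intInt_eq_toReal (g := fun τ => Sig τ p.2)
          (hSmeas.comp (measurable_id.prodMk measurable_const))
          (fun τ => hSpos τ p.2) ht
      simp only [freeStream, if_pos hcond]
      rw [hI, ENNReal.ofReal_mul (hSpos t p.2), ENNReal.ofReal_mul (Real.exp_pos _).le]
      simp only [hH, hc, hψ, Set.indicator_of_mem hy]
      exact le_of_eq (by ring)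
    · simp only [freeStream, if_neg hcond, mul_zero, ENNReal.ofReal_zero]
      exact bot_le
  -- the original integrand is dominated by `h` for `t ≥ s`
  have hgb : ∀ t, s ≤ t →
      (∫⁻ p, ENNReal.ofReal (Sig t p.2 * freeStream Ω Sig t s f p)
        ∂((volume.restrict Ω).prod μ)) ≤ h t := by
    intro t ht
    apply lintegral_mono_ae
    have hae : ∀ᵐ p ∂((volume.restrict Ω).prod μ),
        (p : EuclideanSpace ℝ (Fin d) × EuclideanSpace ℝ (Fin d)).1 ∈ Ω := by
      rw [ae_iff]
      have hset : {p : EuclideanSpace ℝ (Fin d) × EuclideanSpace ℝ (Fin d) | ¬ p.1 ∈ Ω}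
          = Ωᶜ ×ˢ Set.univ := by
        ext p; simp [Set.mem_prod]
      rw [hset, Measure.prod_prod, Measure.restrict_apply hΩ.measurableSet.compl]
      simp
    filter_upwards [hae] with p hp
    exact hpb t ht p hp
  -- translation bound
  have htb : ∀ (t : ℝ) (v : EuclideanSpace ℝ (Fin d)),
      (∫⁻ x, ψ (x - (t - s) • v, v) ∂(volume.restrict Ω)) ≤ F v := by
    intro t v
    calc ∫⁻ x, ψ (x - (t - s) • v, v) ∂(volume.restrict Ω)
        ≤ ∫⁻ x, ψ (x - (t - s) • v, v)
            ∂(volume : Measure (EuclideanSpace ℝ (Fin d))) :=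
          lintegral_mono' Measure.restrict_le_self le_rfl
      _ = F v := by
          simp_rw [sub_eq_add_neg]
          exact lintegral_add_right_eq_self (fun x => ψ (x, v)) (-((t - s) • v))
  -- bound h t by the separated integral
  have hhb : ∀ t : ℝ, h t ≤ ∫⁻ v, c t v * F v ∂μ := by
    intro t
    have hsec : AEMeasurable (fun p : EuclideanSpace ℝ (Fin d) × EuclideanSpace ℝ (Fin d) =>
        H t p) ((volume.restrict Ω).prod μ) :=
      (hHm.comp (measurable_const.prodMk measurable_id)).aemeasurable
    have hswap := lintegral_prod_symm (μ := volume.restrict Ω) (ν := μ)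
      (fun p => H t p) hsec
    simp only [hh]
    rw [hswap]
    apply lintegral_mono
    intro v
    show (∫⁻ x, H t (x, v) ∂(volume.restrict Ω)) ≤ c t v * F v
    have hcmul : ∫⁻ x, H t (x, v) ∂(volume.restrict Ω)
        = c t v * ∫⁻ x, ψ (x - (t - s) • v, v) ∂(volume.restrict Ω) := by
      simp only [hH]
      exact lintegral_const_mul' _ _ (ENNReal.mul_ne_top ENNReal.ofReal_ne_top
        ENNReal.ofReal_ne_top)
    rw [hcmul]
    exact mul_le_mul_right (htb t v) _
  -- the per-velocity time integral is bounded
  set K : ℝ≥0∞ := ∫⁻ u in Set.Ioi (0:ℝ), ENNReal.ofReal (-Real.log u) with hK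
  have hcv : ∀ᵐ v ∂μ, (∫⁻ t in Set.Ici s, c t v) ≤ K := by
    filter_upwards [hSloc] with v hv
    have hgm : Measurable (fun t => Sig t v) :=
      hSmeas.comp (measurable_id.prodMk measurable_const)
    have hfin : ∀ t, (∫⁻ τ in Set.Ioc s t, ENNReal.ofReal (Sig τ v)) ≠ ⊤ := by
      intro t
      have hsub : Set.Ioc s t ⊆ Set.Icc 0 (max t 0) := by
        intro τ hτ
        exact ⟨le_trans hs (le_of_lt hτ.1), le_trans hτ.2 (le_max_left _ _)⟩
      exact hon16_lint_ne_top_of_integrableOn ((hv (max t 0)).mono_set hsub)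
    exact hon16_absorb_bound (fun t => Sig t v) hgm s hfin
  -- total mass of ψ
  have hFint : (∫⁻ v, F v ∂μ)
      = ∫⁻ p, ENNReal.ofReal (f p) ∂((volume.restrict Ω).prod μ) := by
    have hψeq : ∀ v : EuclideanSpace ℝ (Fin d),
        F v = ∫⁻ x, ENNReal.ofReal (f (x, v)) ∂(volume.restrict Ω) := by
      intro v
      have hfun : (fun x => ψ (x, v))
          = Set.indicator Ω (fun x => ENNReal.ofReal (f (x, v))) := by
        funext x
        simp only [hψ]
        by_cases hx : x ∈ Ω
        · simp [Set.indicator_of_mem hx]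
        · simp [Set.indicator_of_notMem hx]
      simp only [hF]
      rw [hfun, lintegral_indicator hΩ.measurableSet]
    have hswap := lintegral_prod_symm (μ := volume.restrict Ω) (ν := μ)
      (fun p => ENNReal.ofReal (f p)) (ENNReal.measurable_ofReal.comp hfmeas).aemeasurable
    simp_rw [hψeq]
    exact hswap.symm
  have hFfin : (∫⁻ v, F v ∂μ) ≠ ⊤ := by
    rw [hFint]
    have h1 := hfint.hasFiniteIntegral
    rw [hasFiniteIntegral_iff_ofReal (ae_of_all _ hfpos)] at h1
    exact ne_of_lt h1
  have hT : (∫⁻ t in Set.Ici s, h t) < ⊤ := by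
    calc ∫⁻ t in Set.Ici s, h t
        ≤ ∫⁻ t in Set.Ici s, ∫⁻ v, c t v * F v ∂μ := lintegral_mono hhb
      _ = ∫⁻ v, (∫⁻ t in Set.Ici s, c t v * F v) ∂μ := by
          apply lintegral_lintegral_swap
          exact ((hcm.comp (measurable_fst.prodMk measurable_snd)).mul
            (hFm.comp measurable_snd)).aemeasurable
      _ = ∫⁻ v, (∫⁻ t in Set.Ici s, c t v) * F v ∂μ := by
          apply lintegral_congr
          intro v
          exact lintegral_mul_const _ (hcm.comp (measurable_id.prodMk measurable_const))
      _ ≤ ∫⁻ v, K * F v ∂μ := by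
          apply lintegral_mono_ae
          filter_upwards [hcv] with v hv
          exact mul_le_mul_left hv _
      _ = K * ∫⁻ v, F v ∂μ := lintegral_const_mul K hFm
      _ < ⊤ := ENNReal.mul_lt_top hon16_log_lintegral_lt_top (lt_top_iff_ne_top.2 hFfin)
  have hfinae := ae_lt_top hhm (ne_of_lt hT)
  filter_upwards [hfinae, ae_restrict_mem measurableSet_Ici] with t ht1 ht2
  exact lt_of_le_of_lt (hgb t ht2) ht1
end
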